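/- arXiv:1804.02116 — 7 statements merged into one kernel-verified Lean document; each statement's English description precedes it below -/
import Mathlib

section
/- Let R be a Dedekind domain with field of fractions Q, and let B be a rank-1 torsion-free R-module (i.e. a nonzero R-submodule of Q). A finite rank torsion-free R-module A is generated by B (i.e. the image of the evaluation map Hom_R(B,A) ⊗_R B → A is all of A) if and only if for every nonzero a ∈ A there exists an injective R-module homomorphism from B into the pure submodule of A generated by a. -/
open TensorProduct

/-- The pure submodule of `A` generated by `a`:
`⟨a⟩_* = {x ∈ A : r • x ∈ R a for some nonzero r ∈ R}`. -/
def pureGen (R : Type*) {A : Type*} [CommRing R] [IsDomain R] [AddCommGroup A]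
    [Module R A] (a : A) : Submodule R A where
  carrier := {x | ∃ r : R, r ≠ 0 ∧ ∃ s : R, r • x = s • a}
  zero_mem' := ⟨1, one_ne_zero, 0, by simp⟩
  add_mem' := by
    rintro x y ⟨r, hr, s, hx⟩ ⟨r', hr', s', hy⟩
    refine ⟨r * r', mul_ne_zero hr hr', r' * s + r * s', ?_⟩
    rw [smul_add, add_smul, mul_smul, mul_smul, mul_smul, smul_comm r r' x, hx, hy,
      smul_comm r' s a, smul_comm r s' a, smul_smul, smul_smul, mul_comm s' r]
  smul_mem' := by
    rintro c x ⟨r, hr, s, hx⟩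
    exact ⟨r, hr, c * s, by rw [smul_comm, hx, mul_smul]⟩

set_option linter.unusedSectionVars false



section Aux

variable {R : Type*} [CommRing R] [IsDomain R] [IsDedekindDomain R]

local notation "K" => FractionRing R

lemma fl_inj : Function.Injective (algebraMap R K) := IsFractionRing.injective R (FractionRing R)

lemma map_ne_zero' {b : R} (hb : b ≠ 0) : algebraMap R K b ≠ 0 :=
  (map_ne_zero_iff _ fl_inj).mpr hb

lemma smulK_eq_zero {r : R} {x : K} (h : r • x = 0) : r = 0 ∨ x = 0 := by
  rw [Algebra.smul_def, mul_eq_zero] at h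
  rcases h with h | h
  · exact Or.inl (by simpa using fl_inj (by simpa using h))
  · exact Or.inr h

lemma smulK_cancel {r : R} (hr : r ≠ 0) {x y : K} (h : r • x = r • y) : x = y := by
  have : r • (x - y) = 0 := by rw [smul_sub, h, sub_self]
  rcases smulK_eq_zero this with h' | h'
  · exact absurd h' hr
  · exact sub_eq_zero.mp h'

lemma exists_frac (α : K) : ∃ a b : R, b ≠ 0 ∧ algebraMap R K b * α = algebraMap R K a := by
  obtain ⟨⟨a, b⟩, h⟩ := IsLocalization.mk'_surjective (nonZeroDivisors R) α
  refine ⟨a, b, nonZeroDivisors.ne_zero b.2, ?_⟩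
  rw [← h]
  exact IsLocalization.mk'_spec' _ a b

lemma frac_eq {m r a₁ b₁ a₂ b₂ : R} {α β : K} (hb₁ : b₁ ≠ 0) (hb₂ : b₂ ≠ 0)
    (h₁ : algebraMap R K b₁ * α = algebraMap R K a₁)
    (h₂ : algebraMap R K b₂ * β = algebraMap R K a₂)
    (h : m * (a₁ * b₂) = r * (a₂ * b₁)) : m • α = r • β := by
  have hbb : algebraMap R K (b₁ * b₂) ≠ 0 := map_ne_zero' (mul_ne_zero hb₁ hb₂)
  apply mul_left_cancel₀ hbb
  rw [Algebra.smul_def, Algebra.smul_def]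
  have e1 : algebraMap R K (b₁ * b₂) * (algebraMap R K m * α) = algebraMap R K (m * (a₁ * b₂)) := by
    rw [map_mul, map_mul, map_mul, ← h₁]; ring
  have e2 : algebraMap R K (b₁ * b₂) * (algebraMap R K r * β) = algebraMap R K (r * (a₂ * b₁)) := by
    rw [map_mul, map_mul, map_mul, ← h₂]; ring
  rw [e1, e2, h]

lemma num_ne_zero {a b : R} {α : K} (hα : α ≠ 0) (hb : b ≠ 0)
    (h : algebraMap R K b * α = algebraMap R K a) : a ≠ 0 := by
  rintro rfl
  rw [map_zero] at h
  rcases mul_eq_zero.mp h with h' | h'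
  · exact map_ne_zero' hb h'
  · exact hα h'

lemma cross {α β : K} (hβ : β ≠ 0) : ∃ s r : R, s ≠ 0 ∧ s • α = r • β := by
  obtain ⟨a₁, b₁, hb₁, h₁⟩ := exists_frac α
  obtain ⟨a₂, b₂, hb₂, h₂⟩ := exists_frac β
  have ha₂ : a₂ ≠ 0 := num_ne_zero hβ hb₂ h₂
  exact ⟨a₂ * b₁, a₁ * b₂, mul_ne_zero ha₂ hb₁, frac_eq hb₁ hb₂ h₁ h₂ (by ring)⟩

lemma locglob {M : Type*} [AddCommGroup M] [Module R M] {N : Submodule R M} {x : M}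
    (h : ∀ P : Ideal R, P.IsMaximal → ∃ s ∉ P, s • x ∈ N) : x ∈ N := by
  let C : Ideal R :=
    { carrier := {r | r • x ∈ N}
      add_mem' := fun ha hb => by simpa [add_smul] using N.add_mem ha hb
      zero_mem' := by simp
      smul_mem' := fun c r hr => by
        simpa [smul_eq_mul, mul_smul] using N.smul_mem c hr }
  have h1 : (1 : R) ∈ C := by
    by_contra h1
    have hC : C ≠ ⊤ := fun hC => h1 (hC ▸ Submodule.mem_top)
    obtain ⟨P, hP, hCP⟩ := Ideal.exists_le_maximal C hC
    obtain ⟨s, hs, hsx⟩ := h P hP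
    exact hs (hCP hsx)
  have : (1 : R) • x ∈ N := h1
  simpa using this

end Aux

section Ideals
variable {R : Type*} [CommRing R] [IsDomain R] [IsDedekindDomain R]

local notation "K" => FractionRing R

lemma mul_not_mem {P : Ideal R} (hP : P.IsPrime) {a b : R} (ha : a ∉ P) (hb : b ∉ P) :
    a * b ∉ P := fun h => (hP.mem_or_mem h).elim ha hb

lemma one_not_mem {P : Ideal R} (hP : P.IsPrime) : (1 : R) ∉ P :=
  (Ideal.ne_top_iff_one P).mp hP.ne_top

lemma cop {a b : R} (ha : a ≠ 0) (hb : b ≠ 0) :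
    ∃ A' B' : Ideal R, A' ⊔ B' = ⊤ ∧
      Ideal.span {a} = (Ideal.span {a} ⊔ Ideal.span {b}) * A' ∧
      Ideal.span {b} = (Ideal.span {a} ⊔ Ideal.span {b}) * B' := by
  set c : Ideal R := Ideal.span {a} ⊔ Ideal.span {b} with hc
  have hac : Ideal.span {a} ≤ c := le_sup_left
  have hbc : Ideal.span {b} ≤ c := le_sup_right
  have hc0 : c ≠ 0 := by
    intro h
    apply ha
    have : a ∈ c := hac (Ideal.mem_span_singleton_self a)
    rw [h] at this
    simpa using this
  obtain ⟨A', hA'⟩ := Ideal.dvd_iff_le.mpr hac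
  obtain ⟨B', hB'⟩ := Ideal.dvd_iff_le.mpr hbc
  have hmul : c * (A' ⊔ B') = c * ⊤ := by
    rw [Ideal.mul_sup, ← hA', ← hB', Ideal.mul_top, ← hc]
  exact ⟨A', B', mul_left_cancel₀ hc0 hmul, hA', hB'⟩

lemma dichR {P : Ideal R} (hP : P.IsPrime) {a b : R} (ha : a ≠ 0) (hb : b ≠ 0) :
    (∃ m ∉ P, ∃ r : R, m * a = r * b) ∨ (∃ m ∉ P, ∃ r : R, m * b = r * a) := by
  obtain ⟨A', B', hsum, hA', hB'⟩ := cop ha hb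
  set c : Ideal R := Ideal.span {a} ⊔ Ideal.span {b} with hc
  have hnot : ¬ (A' ≤ P ∧ B' ≤ P) := by
    rintro ⟨h1, h2⟩
    have : (⊤ : Ideal R) ≤ P := hsum ▸ sup_le h1 h2
    exact hP.ne_top (top_le_iff.mp this)
  rcases not_and_or.mp hnot with h | h
  · -- A' ⊄ P : m ∈ A' \ P, m * b ∈ span a
    obtain ⟨m, hmA, hmP⟩ := SetLike.not_le_iff_exists.mp h
    right
    refine ⟨m, hmP, ?_⟩
    have : m * b ∈ Ideal.span {a} := by
      have h1 : m * b ∈ A' * Ideal.span {b} := Ideal.mul_mem_mul hmA (Ideal.mem_span_singleton_self b)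
      have h2 : A' * Ideal.span {b} = Ideal.span {a} * B' := by
        rw [hB', ← mul_assoc, mul_comm A' c, ← hA']
      rw [h2] at h1
      exact Ideal.mul_le_left h1
    obtain ⟨r, hr⟩ := Ideal.mem_span_singleton.mp this
    exact ⟨r, by rw [hr, mul_comm]⟩
  · obtain ⟨m, hmB, hmP⟩ := SetLike.not_le_iff_exists.mp h
    left
    refine ⟨m, hmP, ?_⟩
    have : m * a ∈ Ideal.span {b} := by
      have h1 : m * a ∈ B' * Ideal.span {a} := Ideal.mul_mem_mul hmB (Ideal.mem_span_singleton_self a)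
      have h2 : B' * Ideal.span {a} = Ideal.span {b} * A' := by
        rw [hA', ← mul_assoc, mul_comm B' c, ← hB']
      rw [h2] at h1
      exact Ideal.mul_le_left h1
    obtain ⟨r, hr⟩ := Ideal.mem_span_singleton.mp this
    exact ⟨r, by rw [hr, mul_comm]⟩

lemma minP {P : Ideal R} (hP : P.IsPrime) {i : Ideal R} {rs : R} (hrs : rs ∈ i)
    (hrs' : rs ∉ i * P) : ∀ r ∈ i, ∃ m ∉ P, ∃ r₂ : R, m * r = r₂ * rs := by
  intro r hr
  by_cases hr0 : r = 0
  · exact ⟨1, one_not_mem hP, 0, by simp [hr0]⟩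
  have hrs0 : rs ≠ 0 := fun h => hrs' (h ▸ (i * P).zero_mem)
  obtain ⟨A', B', hsum, hA', hB'⟩ := cop hr0 hrs0
  set c : Ideal R := Ideal.span {r} ⊔ Ideal.span {rs} with hc
  have hci : c ≤ i := sup_le (Ideal.span_le.mpr (by simpa using hr))
    (Ideal.span_le.mpr (by simpa using hrs))
  have hB'P : ¬ B' ≤ P := by
    intro hle
    apply hrs'
    have : Ideal.span {rs} ≤ i * P := hB' ▸ Ideal.mul_mono hci hle
    exact this (Ideal.mem_span_singleton_self rs)
  obtain ⟨m, hmB, hmP⟩ := SetLike.not_le_iff_exists.mp hB'P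
  refine ⟨m, hmP, ?_⟩
  have : m * r ∈ Ideal.span {rs} := by
    have h1 : m * r ∈ B' * Ideal.span {r} := Ideal.mul_mem_mul hmB (Ideal.mem_span_singleton_self r)
    have h2 : B' * Ideal.span {r} = Ideal.span {rs} * A' := by
      rw [hA', ← mul_assoc, mul_comm B' c, ← hB']
    rw [h2] at h1
    exact Ideal.mul_le_left h1
  obtain ⟨r₂, hr₂⟩ := Ideal.mem_span_singleton.mp this
  exact ⟨r₂, by rw [hr₂, mul_comm]⟩

lemma pow_not_le {P L : Ideal R} (hP : P.IsMaximal) (hL : L.IsMaximal) (hne : L ≠ P) (n : ℕ) :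
    ¬ P ^ n ≤ L := by
  intro hle
  have hPL : P ≤ L := by
    induction n with
    | zero => simpa using absurd (top_le_iff.mp (by simpa using hle)) hL.ne_top
    | succ k ih =>
      rw [pow_succ] at hle
      rcases hL.isPrime.mul_le.mp hle with h | h
      · exact ih h
      · exact h
  exact hne ((hP.eq_of_le hL.ne_top hPL).symm)

lemma sconstruct {P : Ideal R} (hP : P.IsMaximal) {t u : R} (hu : u ≠ 0) :
    ∃ s ∉ P, ∀ L : Ideal R, L.IsMaximal → L ≠ P → ∃ m ∉ L, ∃ r : R, m * s * t = r * u := by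
  by_cases hPb : P = ⊥
  · subst hPb
    refine ⟨1, one_not_mem hP.isPrime, ?_⟩
    intro L hL hLP
    exact absurd (hP.eq_of_le hL.ne_top bot_le).symm hLP
  · let h : Ideal R :=
      { carrier := {r | u ∣ r * t}
        add_mem' := fun {x y} hx hy => by simpa [add_mul] using dvd_add hx hy
        zero_mem' := by simp
        smul_mem' := fun c x hx => by
          have : u ∣ c * (x * t) := Dvd.dvd.mul_left hx c
          simpa [smul_eq_mul, mul_assoc] using this }
    have hmemh : ∀ {r : R}, r ∈ h ↔ u ∣ r * t := Iff.rfl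
    have hh0 : h ≠ 0 := by
      intro hbot
      apply hu
      have : u ∈ h := hmemh.mpr ⟨t, rfl⟩
      rw [hbot] at this
      simpa using this
    have hPprime : Prime P := Ideal.prime_of_isPrime hPb hP.isPrime
    obtain ⟨n, g, hgP, hfac⟩ := WfDvdMonoid.max_power_factor hh0 hPprime.irreducible
    have hgle : ¬ g ≤ P := fun hle => hgP (Ideal.dvd_iff_le.mpr hle)
    obtain ⟨s, hsg, hsP⟩ := SetLike.not_le_iff_exists.mp hgle
    refine ⟨s, hsP, ?_⟩
    intro L hL hLP
    obtain ⟨m, hmPn, hmL⟩ := SetLike.not_le_iff_exists.mp (pow_not_le hP hL hLP n)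
    have hms : m * s ∈ h := by
      have := Ideal.mul_mem_mul hmPn hsg
      rw [← hfac] at this
      exact this
    obtain ⟨r, hr⟩ := hmemh.mp hms
    exact ⟨m, hmL, r, by rw [hr, mul_comm]⟩

end Ideals

section Core
variable {R : Type*} [CommRing R] [IsDomain R] [IsDedekindDomain R]

local notation "K" => FractionRing R

lemma dichK {P : Ideal R} (hP : P.IsPrime) {α β : K} (hα : α ≠ 0) (hβ : β ≠ 0) :
    (∃ m ∉ P, ∃ r : R, m • α = r • β) ∨ (∃ m ∉ P, ∃ r : R, m • β = r • α) := by
  obtain ⟨a₁, b₁, hb₁, h₁⟩ := exists_frac α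
  obtain ⟨a₂, b₂, hb₂, h₂⟩ := exists_frac β
  have ha₁ : a₁ ≠ 0 := num_ne_zero hα hb₁ h₁
  have ha₂ : a₂ ≠ 0 := num_ne_zero hβ hb₂ h₂
  rcases dichR hP (mul_ne_zero ha₁ hb₂) (mul_ne_zero ha₂ hb₁) with ⟨m, hm, r, h⟩ | ⟨m, hm, r, h⟩
  · exact Or.inl ⟨m, hm, r, frac_eq hb₁ hb₂ h₁ h₂ (by linear_combination h)⟩
  · exact Or.inr ⟨m, hm, r, frac_eq hb₂ hb₁ h₂ h₁ (by linear_combination h)⟩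

lemma case2 {P : Ideal R} (hP : P.IsMaximal) {I : Submodule R K} {y₀ : K} (hy₀ : y₀ ∈ I)
    (hy₀0 : y₀ ≠ 0)
    (hnc : ¬ ∃ y ∈ I, y ≠ 0 ∧ ∀ u ∈ I, ∃ m ∉ P, ∃ r : R, m • u = r • y) :
    ∀ w : K, ∃ m ∉ P, m • w ∈ I := by
  intro w
  by_contra hw
  push_neg at hw
  have h1P : (1 : R) ∉ P := one_not_mem hP.isPrime
  have hw0 : w ≠ 0 := by
    rintro rfl
    exact hw 1 h1P (by simpa using I.zero_mem)
  have stepA : ∀ y ∈ I, y ≠ 0 → ∃ m ∉ P, ∃ r : R, m • y = r • w := by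
    intro y hy hy0
    rcases dichK hP.isPrime hw0 hy0 with ⟨m, hm, r, he⟩ | h
    · exact absurd (he ▸ I.smul_mem r hy) (hw m hm)
    · exact h
  -- the ideal of "numerators" of I with respect to w, at P
  let i : Ideal R :=
    { carrier := {r | ∃ m ∉ P, (m * r) • w ∈ I}
      add_mem' := by
        rintro x y ⟨m₁, hm₁, h₁⟩ ⟨m₂, hm₂, h₂⟩
        refine ⟨m₁ * m₂, mul_not_mem hP.isPrime hm₁ hm₂, ?_⟩
        have : (m₂ * (m₁ * x)) • w + (m₁ * (m₂ * y)) • w ∈ I :=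
          I.add_mem (by rw [mul_smul]; exact I.smul_mem m₂ h₁)
            (by rw [mul_smul]; exact I.smul_mem m₁ h₂)
        have he : (m₁ * m₂ * (x + y)) • w = (m₂ * (m₁ * x)) • w + (m₁ * (m₂ * y)) • w := by
          rw [← add_smul]; ring_nf
        rwa [he]
      zero_mem' := ⟨1, h1P, by simpa using I.zero_mem⟩
      smul_mem' := by
        rintro c x ⟨m, hm, hx⟩
        refine ⟨m, hm, ?_⟩
        have : (c * (m * x)) • w ∈ I := by rw [mul_smul]; exact I.smul_mem c hx
        have he : (m * (c • x)) • w = (c * (m * x)) • w := by rw [smul_eq_mul]; ring_nf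
        rwa [he] }
  have hmemi : ∀ {r : R}, r ∈ i ↔ ∃ m ∉ P, (m * r) • w ∈ I := Iff.rfl
  have hi0 : i ≠ ⊥ := by
    obtain ⟨m₁, hm₁, r₁, h₁⟩ := stepA y₀ hy₀ hy₀0
    have hr₁ : r₁ ∈ i := hmemi.mpr ⟨1, h1P, by rw [one_mul]; exact h₁ ▸ I.smul_mem m₁ hy₀⟩
    have hr₁0 : r₁ ≠ 0 := by
      rintro rfl
      have hm₁0 : m₁ ≠ 0 := fun h => hm₁ (h ▸ P.zero_mem)
      rcases smulK_eq_zero (h₁.trans (zero_smul R w)) with h | h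
      · exact hm₁0 h
      · exact hy₀0 h
    exact fun hbot => hr₁0 (by rwa [hbot, Submodule.mem_bot] at hr₁)
  have hlt : i * P < i := by
    refine lt_of_le_of_ne Ideal.mul_le_left ?_
    intro he
    have : i * P = i * ⊤ := by rw [Ideal.mul_top, he]
    exact hP.ne_top (mul_left_cancel₀ hi0 this)
  obtain ⟨rs, hrs, hrs'⟩ := SetLike.exists_of_lt hlt
  obtain ⟨m₀, hm₀, hyI⟩ := hmemi.mp hrs
  apply hnc
  have hrs0 : rs ≠ 0 := fun h => hrs' (h ▸ (i * P).zero_mem)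
  have hm₀0 : m₀ ≠ 0 := fun h => hm₀ (h ▸ P.zero_mem)
  refine ⟨(m₀ * rs) • w, hyI, ?_, ?_⟩
  · intro h
    rcases smulK_eq_zero h with h' | h'
    · exact mul_ne_zero hm₀0 hrs0 h'
    · exact hw0 h'
  · intro u hu
    by_cases hu0 : u = 0
    · exact ⟨1, h1P, 0, by simp [hu0]⟩
    obtain ⟨m₁, hm₁, r₁, h₁⟩ := stepA u hu hu0
    have hr₁i : r₁ ∈ i := hmemi.mpr ⟨1, h1P, by rw [one_mul]; exact h₁ ▸ I.smul_mem m₁ hu⟩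
    obtain ⟨m₂, hm₂, r₂, h₂⟩ := minP hP.isPrime hrs hrs' r₁ hr₁i
    refine ⟨m₀ * (m₁ * m₂), mul_not_mem hP.isPrime hm₀ (mul_not_mem hP.isPrime hm₁ hm₂), r₂, ?_⟩
    calc (m₀ * (m₁ * m₂)) • u = (m₀ * m₂) • (m₁ • u) := by
          rw [← mul_smul]; ring_nf
      _ = (m₀ * m₂) • (r₁ • w) := by rw [h₁]
      _ = (m₀ * (m₂ * r₁)) • w := by rw [← mul_smul]; ring_nf
      _ = (m₀ * (r₂ * rs)) • w := by rw [h₂]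
      _ = r₂ • ((m₀ * rs) • w) := by rw [← mul_smul]; ring_nf

lemma localstep {I J : Submodule R K} {y₀ : K} (hy₀ : y₀ ∈ I) (hy₀0 : y₀ ≠ 0) {q : K}
    (hq : q ≠ 0) (hqIJ : ∀ u ∈ I, q * u ∈ J) {x : K} (hx : x ∈ J) (hx0 : x ≠ 0)
    {P : Ideal R} (hP : P.IsMaximal) : ∃ s ∉ P, s • x ∈ (J / I) * I := by
  by_cases hc : ∃ y ∈ I, y ≠ 0 ∧ ∀ u ∈ I, ∃ m ∉ P, ∃ r : R, m • u = r • y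
  · obtain ⟨y, hyI, hy0, hyd⟩ := hc
    have hqy : q * y ≠ 0 := mul_ne_zero hq hy0
    obtain ⟨a, b, hb, hab⟩ := exists_frac x
    have ha : a ≠ 0 := num_ne_zero hx0 hb hab
    obtain ⟨a', b', hb', hab'⟩ := exists_frac (q * y)
    have ha' : a' ≠ 0 := num_ne_zero hqy hb' hab'
    obtain ⟨s, hsP, hs⟩ := sconstruct hP (t := a * b') (mul_ne_zero ha' hb)
    set c : K := algebraMap R K s * x * y⁻¹ with hcdef
    have hcy : c * y = s • x := by
      rw [hcdef, Algebra.smul_def]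
      field_simp
    have hcmem : c ∈ J / I := by
      rw [Submodule.mem_div_iff_forall_mul_mem]
      intro u' hu'
      apply locglob (R := R)
      intro L hL
      by_cases hLP : L = P
      · subst hLP
        obtain ⟨m', hm', r, hr⟩ := hyd u' hu'
        refine ⟨m', hm', ?_⟩
        have : m' • (c * u') = (r * s) • x := by
          rw [Algebra.smul_def, Algebra.smul_def] at hr ⊢
          rw [Algebra.smul_def] at hcy
          rw [map_mul]
          calc algebraMap R K m' * (c * u') = c * (algebraMap R K m' * u') := by ring
            _ = c * (algebraMap R K r * y) := by rw [hr]
            _ = algebraMap R K r * (c * y) := by ring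
            _ = algebraMap R K r * (algebraMap R K s * x) := by rw [hcy]
            _ = algebraMap R K r * algebraMap R K s * x := by ring
        rw [this]
        exact J.smul_mem _ hx
      · obtain ⟨m, hmL, r, hmr⟩ := hs L hL hLP
        refine ⟨m, hmL, ?_⟩
        -- key : (m * s) • x = r • (q * y)
        have key : (m * s) • x = r • (q * y) :=
          frac_eq hb hb' hab hab' (by linear_combination hmr)
        have : m • (c * u') = r • (q * u') := by
          rw [Algebra.smul_def, Algebra.smul_def, hcdef]
          have hy' : y⁻¹ * y = 1 := inv_mul_cancel₀ hy0
          rw [Algebra.smul_def, map_mul, Algebra.smul_def] at key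
          calc algebraMap R K m * (algebraMap R K s * x * y⁻¹ * u')
              = algebraMap R K m * algebraMap R K s * x * y⁻¹ * u' := by ring
            _ = algebraMap R K r * (q * y) * y⁻¹ * u' := by rw [key]
            _ = algebraMap R K r * (q * u') * (y⁻¹ * y) := by ring
            _ = algebraMap R K r * (q * u') := by rw [hy']; ring
        rw [this]
        exact J.smul_mem _ (hqIJ u' hu')
    refine ⟨s, hsP, ?_⟩
    rw [← hcy]
    exact Submodule.mul_mem_mul hcmem hyI
  · obtain ⟨m, hm, hz⟩ := case2 hP hy₀ hy₀0 hc (x * q⁻¹)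
    refine ⟨m, hm, ?_⟩
    have : m • x = q * (m • (x * q⁻¹)) := by
      rw [Algebra.smul_def, Algebra.smul_def]
      field_simp
    rw [this]
    exact Submodule.mul_mem_mul ((Submodule.mem_div_iff_forall_mul_mem).mpr hqIJ) hz

lemma core {I J : Submodule R K} {y₀ : K} (hy₀ : y₀ ∈ I) (hy₀0 : y₀ ≠ 0) {q : K}
    (hq : q ≠ 0) (hqIJ : ∀ u ∈ I, q * u ∈ J) {x : K} (hx : x ∈ J) : x ∈ (J / I) * I := by
  by_cases hx0 : x = 0
  · simp [hx0]
  · exact locglob fun P hP => localstep hy₀ hy₀0 hq hqIJ hx hx0 hP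

end Core

section ModSide
variable {R : Type*} [CommRing R] [IsDomain R] [IsDedekindDomain R]
variable {A : Type*} [AddCommGroup A] [Module R A] [NoZeroSMulDivisors R A]

local notation "K" => FractionRing R

lemma mem_pureGen {a x : A} : x ∈ pureGen R a ↔ ∃ r : R, r ≠ 0 ∧ ∃ s : R, r • x = s • a :=
  Iff.rfl

lemma pure_ratio_eq {a x : A} (ha : a ≠ 0) {r s r' s' : R}
    (h : r • x = s • a) (h' : r' • x = s' • a) : r' * s = r * s' := by
  have e : (r' * s) • a = (r * s') • a := by
    rw [mul_smul, mul_smul, ← h, ← h', smul_comm]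
  have : (r' * s - r * s') • a = 0 := by rw [sub_smul, e, sub_self]
  rcases smul_eq_zero.mp this with h0 | h0
  · exact sub_eq_zero.mp h0
  · exact absurd h0 ha

noncomputable def psiFun (a : A) (x : pureGen R a) : K :=
  algebraMap R K (mem_pureGen.mp x.2).choose_spec.2.choose /
    algebraMap R K (mem_pureGen.mp x.2).choose

lemma psiFun_spec {a : A} (ha : a ≠ 0) (x : pureGen R a) {r s : R} (hr : r ≠ 0)
    (h : r • (x : A) = s • a) :
    psiFun a x = algebraMap R K s / algebraMap R K r := by
  have hr₀ := (mem_pureGen.mp x.2).choose_spec.1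
  have h₀ := (mem_pureGen.mp x.2).choose_spec.2.choose_spec
  have hval : psiFun a x =
      algebraMap R K (mem_pureGen.mp x.2).choose_spec.2.choose /
        algebraMap R K (mem_pureGen.mp x.2).choose := rfl
  rw [hval, div_eq_div_iff (map_ne_zero' hr₀) (map_ne_zero' hr), ← map_mul, ← map_mul]
  exact congrArg _ (by linear_combination pure_ratio_eq ha h₀ h)

noncomputable def psi (a : A) (ha : a ≠ 0) : pureGen R a →ₗ[R] K where
  toFun := psiFun a
  map_add' := by
    intro x y
    obtain ⟨r₁, hr₁, s₁, h₁⟩ := mem_pureGen.mp x.2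
    obtain ⟨r₂, hr₂, s₂, h₂⟩ := mem_pureGen.mp y.2
    have hxy : (r₁ * r₂) • ((x + y : pureGen R a) : A) = (r₂ * s₁ + r₁ * s₂) • a := by
      have hco : ((x + y : pureGen R a) : A) = (x : A) + (y : A) := rfl
      rw [hco, smul_add, add_smul]
      congr 1
      · rw [mul_comm r₁ r₂, mul_smul, h₁, mul_smul]
      · rw [mul_smul, h₂, mul_smul]
    rw [psiFun_spec ha _ (mul_ne_zero hr₁ hr₂) hxy, psiFun_spec ha x hr₁ h₁,
      psiFun_spec ha y hr₂ h₂]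
    rw [map_add, map_mul, map_mul, map_mul]
    rw [div_add_div _ _ (map_ne_zero' hr₁) (map_ne_zero' hr₂)]
    ring_nf
  map_smul' := by
    intro c x
    obtain ⟨r₁, hr₁, s₁, h₁⟩ := mem_pureGen.mp x.2
    have hcx : r₁ • ((c • x : pureGen R a) : A) = (c * s₁) • a := by
      have hco : ((c • x : pureGen R a) : A) = c • (x : A) := rfl
      rw [hco, smul_comm, h₁, mul_smul]
    show psiFun a (c • x) = (RingHom.id R) c • psiFun a x
    rw [RingHom.id_apply, psiFun_spec ha _ hr₁ hcx, psiFun_spec ha x hr₁ h₁,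
      Algebra.smul_def, map_mul]
    ring

lemma psi_inj {a : A} (ha : a ≠ 0) : Function.Injective (psi (R := R) a ha) := by
  intro x y hxy
  obtain ⟨r₁, hr₁, s₁, h₁⟩ := mem_pureGen.mp x.2
  obtain ⟨r₂, hr₂, s₂, h₂⟩ := mem_pureGen.mp y.2
  have : psiFun a x = psiFun a y := hxy
  rw [psiFun_spec ha (A := A) x hr₁ h₁, psiFun_spec ha y hr₂ h₂,
    div_eq_div_iff (map_ne_zero' hr₁) (map_ne_zero' hr₂), ← map_mul, ← map_mul] at this
  have hRR : s₁ * r₂ = s₂ * r₁ := fl_inj this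
  have he : (r₁ * r₂) • ((x : A) - (y : A)) = 0 := by
    have e1 : (r₁ * r₂) • (x : A) = (s₁ * r₂) • a := by
      rw [mul_comm r₁ r₂, mul_smul, h₁, ← mul_smul, mul_comm r₂ s₁]
    have e2 : (r₁ * r₂) • (y : A) = (s₂ * r₁) • a := by
      rw [mul_smul, h₂, ← mul_smul, mul_comm r₁ s₂]
    rw [smul_sub, e1, e2, hRR, sub_self]
  rcases smul_eq_zero.mp he with h0 | h0
  · exact absurd h0 (mul_ne_zero hr₁ hr₂)
  · exact Subtype.ext (sub_eq_zero.mp h0)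

end ModSide

section Final
variable {R : Type*} [CommRing R] [IsDomain R] [IsDedekindDomain R]
variable {A : Type*} [AddCommGroup A] [Module R A] [NoZeroSMulDivisors R A]

local notation "K" => FractionRing R

lemma hom_mul {B : Submodule R K} (g : B →ₗ[R] K) {b₀ : K} (hb₀ : b₀ ∈ B) (hb₀0 : b₀ ≠ 0)
    (β : B) : g β = (g ⟨b₀, hb₀⟩ * b₀⁻¹) * (β : K) := by
  by_cases hβ : (β : K) = 0
  · have hβ0 : β = 0 := Subtype.ext hβ
    rw [hβ0, map_zero, Submodule.coe_zero, mul_zero]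
  obtain ⟨ρ, τ, hρ, he⟩ := cross (α := (β : K)) hb₀0
  have hsb : ρ • β = τ • (⟨b₀, hb₀⟩ : B) := Subtype.ext (by simpa using he)
  have h2 : ρ • g β = τ • g ⟨b₀, hb₀⟩ := by rw [← map_smul, hsb, map_smul]
  apply smulK_cancel hρ
  simp only [Algebra.smul_def] at h2 he ⊢
  rw [h2]
  calc algebraMap R K τ * g ⟨b₀, hb₀⟩
      = algebraMap R K τ * g ⟨b₀, hb₀⟩ * (b₀⁻¹ * b₀) := by
        rw [inv_mul_cancel₀ hb₀0, mul_one]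
    _ = g ⟨b₀, hb₀⟩ * b₀⁻¹ * (algebraMap R K τ * b₀) := by ring
    _ = g ⟨b₀, hb₀⟩ * b₀⁻¹ * (algebraMap R K ρ * ↑β) := by rw [he]
    _ = algebraMap R K ρ * (g ⟨b₀, hb₀⟩ * b₀⁻¹ * ↑β) := by ring

lemma ev_reach {B : Submodule R K} (b₀ : B) (hb₀0 : (b₀ : K) ≠ 0)
    (t : (B →ₗ[R] A) ⊗[R] B) :
    ∃ g : B →ₗ[R] A, ∃ r : R, r ≠ 0 ∧
      r • (TensorProduct.lift (LinearMap.id : (B →ₗ[R] A) →ₗ[R] (B →ₗ[R] A)) t) = g b₀ := by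
  induction t using TensorProduct.induction_on with
  | zero => exact ⟨0, 1, one_ne_zero, by simp⟩
  | tmul f b =>
    obtain ⟨s, r, hs, he⟩ := cross (α := (b : K)) hb₀0
    refine ⟨r • f, s, hs, ?_⟩
    have hsb : s • b = r • b₀ := Subtype.ext (by simpa using he)
    rw [TensorProduct.lift.tmul]
    show s • (f b) = (r • f) b₀
    rw [LinearMap.smul_apply, ← map_smul, hsb, map_smul]
  | add t₁ t₂ ih₁ ih₂ =>
    obtain ⟨g₁, r₁, hr₁, h₁⟩ := ih₁
    obtain ⟨g₂, r₂, hr₂, h₂⟩ := ih₂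
    refine ⟨r₂ • g₁ + r₁ • g₂, r₁ * r₂, mul_ne_zero hr₁ hr₂, ?_⟩
    rw [map_add, smul_add, LinearMap.add_apply, LinearMap.smul_apply, LinearMap.smul_apply]
    congr 1
    · rw [mul_comm r₁ r₂, mul_smul, h₁]
    · rw [mul_smul, h₂]

lemma forward {B : Submodule R K} {b₀ : K} (hb₀ : b₀ ∈ B) (hb₀0 : b₀ ≠ 0)
    (hsurj : Function.Surjective
      (TensorProduct.lift (LinearMap.id : (B →ₗ[R] A) →ₗ[R] (B →ₗ[R] A)) :
        (B →ₗ[R] A) ⊗[R] B →ₗ[R] A))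
    {a : A} (ha : a ≠ 0) : ∃ f : B →ₗ[R] (pureGen R a), Function.Injective f := by
  obtain ⟨t, ht⟩ := hsurj a
  obtain ⟨g, r, hr, hg⟩ := ev_reach (⟨b₀, hb₀⟩ : B) (by simpa using hb₀0) t
  rw [ht] at hg
  have hmem : ∀ β : B, g β ∈ pureGen R a := by
    intro β
    obtain ⟨ρ, τ, hρ, he⟩ := cross (α := (β : K)) hb₀0
    have hsb : ρ • β = τ • (⟨b₀, hb₀⟩ : B) := Subtype.ext (by simpa using he)
    refine ⟨ρ, hρ, τ * r, ?_⟩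
    rw [← map_smul, hsb, map_smul, ← hg, ← mul_smul]
  have hgb₀ : g ⟨b₀, hb₀⟩ ≠ 0 := by
    rw [← hg]
    intro h0
    rcases smul_eq_zero.mp h0 with h | h
    exacts [hr h, ha h]
  have hker : ∀ β : B, g β = 0 → β = 0 := by
    intro β h0
    by_contra hβ
    have hβ0 : (β : K) ≠ 0 := fun h => hβ (Subtype.ext h)
    obtain ⟨σ, τ, hσ, he⟩ := cross (α := b₀) hβ0
    have hsb : σ • (⟨b₀, hb₀⟩ : B) = τ • β := Subtype.ext (by simpa using he)
    have hz : σ • g ⟨b₀, hb₀⟩ = 0 := by rw [← map_smul, hsb, map_smul, h0, smul_zero]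
    rcases smul_eq_zero.mp hz with h | h
    exacts [hσ h, hgb₀ h]
  refine ⟨{ toFun := fun β => ⟨g β, hmem β⟩
            map_add' := fun β₁ β₂ => Subtype.ext (by simp)
            map_smul' := fun c β => Subtype.ext (by simp) }, ?_⟩
  intro β₁ β₂ h
  have hgg : g β₁ = g β₂ := congrArg Subtype.val h
  have h0 : g (β₁ - β₂) = 0 := by rw [map_sub, hgg, sub_self]
  have := hker _ h0
  rwa [sub_eq_zero] at this

end Final


/-- Let `R` be a Dedekind domain with fraction field `Q` and `B` a
nonzero `R`-submodule of `Q` (a rank-1 torsion-free module).  A finite rank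
torsion-free `R`-module `A` is `B`-generated (the evaluation map
`Hom_R(B,A) ⊗_R B → A` is surjective) if and only if for every nonzero `a ∈ A`
there is an injective `R`-linear map from `B` into the pure submodule `⟨a⟩_*`. -/
theorem stmt0 (R : Type*) [CommRing R] [IsDomain R] [IsDedekindDomain R]
    (B : Submodule R (FractionRing R)) (hB : B ≠ ⊥)
    (A : Type*) [AddCommGroup A] [Module R A] [NoZeroSMulDivisors R A]
    (hfin : Module.rank R A < Cardinal.aleph0) :
    Function.Surjective
      (TensorProduct.lift (LinearMap.id : (B →ₗ[R] A) →ₗ[R] (B →ₗ[R] A)) :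
        (B →ₗ[R] A) ⊗[R] B →ₗ[R] A)
      ↔ ∀ a : A, a ≠ 0 → ∃ f : B →ₗ[R] (pureGen R a), Function.Injective f := by

  obtain ⟨b₀, hb₀B, hb₀0⟩ := (Submodule.ne_bot_iff B).mp hB
  constructor
  · intro hsurj a ha
    exact forward hb₀B hb₀0 hsurj ha
  · intro H a
    by_cases ha : a = 0
    · exact ⟨0, by simp [ha]⟩
    obtain ⟨f, hf⟩ := H a ha
    set ψ := psi (R := R) a ha with hψdef
    set g : B →ₗ[R] FractionRing R := ψ ∘ₗ f with hgdef
    have hginj : Function.Injective g := (psi_inj ha).comp hf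
    have hgmul : ∀ β : B, g β = (g ⟨b₀, hb₀B⟩ * b₀⁻¹) * (β : FractionRing R) :=
      hom_mul g hb₀B hb₀0
    set γ : FractionRing R := g ⟨b₀, hb₀B⟩ * b₀⁻¹ with hγdef
    have hγ : γ ≠ 0 := by
      intro h0
      have h1 : g ⟨b₀, hb₀B⟩ = 0 := by rw [hgmul ⟨b₀, hb₀B⟩, h0, zero_mul]
      have h2 : (⟨b₀, hb₀B⟩ : B) = 0 := hginj (h1.trans (map_zero g).symm)
      exact hb₀0 (congrArg Subtype.val h2)
    set J := LinearMap.range ψ with hJdef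
    have hqIJ : ∀ u ∈ B, γ * u ∈ J := by
      intro u hu
      rw [← hgmul ⟨u, hu⟩]
      exact LinearMap.mem_range.mpr ⟨f ⟨u, hu⟩, rfl⟩
    have hamem : a ∈ pureGen R a := ⟨1, one_ne_zero, 1, rfl⟩
    have hx : ψ ⟨a, hamem⟩ ∈ J := LinearMap.mem_range.mpr ⟨⟨a, hamem⟩, rfl⟩
    have hkey := core (I := B) (J := J) hb₀B hb₀0 hγ hqIJ hx
    set e := LinearEquiv.ofInjective ψ (psi_inj ha) with hedef
    have hesymm : ∀ j : J, ψ (e.symm j) = (j : FractionRing R) := by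
      intro j
      conv_rhs => rw [← e.apply_symm_apply j]
      rfl
    have main : ∀ z, z ∈ (J / B) * B → ∃ w : pureGen R a,
        ((w : A) ∈ LinearMap.range
          (TensorProduct.lift (LinearMap.id : (B →ₗ[R] A) →ₗ[R] (B →ₗ[R] A)))) ∧
        ψ w = z := by
      intro z hz
      refine Submodule.mul_induction_on hz ?_ ?_
      · intro c hc z' hz'
        rw [Submodule.mem_div_iff_forall_mul_mem] at hc
        set mulc : B →ₗ[R] J :=
          { toFun := fun β => ⟨c * (β : FractionRing R), hc β β.2⟩
            map_add' := fun β₁ β₂ => Subtype.ext (by simp [mul_add])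
            map_smul' := fun r β => Subtype.ext (by
              simp [Algebra.smul_def]
              ring) } with hmulcdef
        set h : B →ₗ[R] A := (pureGen R a).subtype ∘ₗ (e.symm.toLinearMap ∘ₗ mulc) with hhdef
        refine ⟨e.symm (mulc ⟨z', hz'⟩), ⟨h ⊗ₜ ⟨z', hz'⟩, ?_⟩, ?_⟩
        · rw [TensorProduct.lift.tmul]
          rfl
        · rw [hesymm]
          rfl
      · rintro z₁ z₂ ⟨w₁, hw₁, he₁⟩ ⟨w₂, hw₂, he₂⟩
        refine ⟨w₁ + w₂, ?_, by rw [map_add, he₁, he₂]⟩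
        rw [Submodule.coe_add]
        exact Submodule.add_mem _ hw₁ hw₂
    obtain ⟨w, hw, hwψ⟩ := main _ hkey
    have hwa : w = ⟨a, hamem⟩ := psi_inj ha hwψ
    obtain ⟨t, ht⟩ := hw
    refine ⟨t, ?_⟩
    rw [ht, hwa]
end

section
/- Let R be a Dedekind domain and let B, C be nonzero R-submodules of the fraction field Q of R. If there exists an injective R-module homomorphism B → C, then C is B-generated, i.e. the evaluation map Hom_R(B,C) ⊗_R B → C is surjective. -/
open TensorProduct

open TensorProduct
open scoped nonZeroDivisors

section Aux

variable {R : Type*} [CommRing R] [IsDomain R] [IsDedekindDomain R]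

local notation "K" => FractionRing R
local notation "alg" => algebraMap R (FractionRing R)

/-- Core valuation-free lemma: if `u` multiplies the ideal `{a : a·c ∈ Rw}` into `R`,
then `u·w ∈ span{w,c}`. -/
lemma L1' {w c u : FractionRing R} (hw0 : w ≠ 0) (hc0 : c ≠ 0)
    (H : ∀ a : R, (alg a) * c ∈ Submodule.span R {w} →
      ∃ ρ : R, u * alg a = alg ρ) :
    u * w ∈ Submodule.span R ({w, c} : Set (FractionRing R)) := by
  obtain ⟨⟨x, y⟩, hxy⟩ := IsLocalization.surj R⁰ (w / c)
  have hy0 : (y : R) ≠ 0 := nonZeroDivisors.coe_ne_zero y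
  have hyK : alg (y : R) ≠ 0 :=
    IsFractionRing.to_map_ne_zero_of_mem_nonZeroDivisors y.2
  have hkey : alg (y : R) * w = alg x * c := by
    field_simp at hxy
    linear_combination hxy
  have hxK : alg x ≠ 0 := by
    intro h
    rw [h, zero_mul] at hkey
    exact hw0 (by simpa [hyK] using mul_eq_zero.mp hkey)
  have hx0 : x ≠ 0 := fun h => hxK (by simp [h])
  have main : ∀ z ∈ (Ideal.span {x} ⊔ Ideal.span {(y : R)}) *
      (Ideal.span {x} ⊓ Ideal.span {(y : R)}),
      u * w * alg z ∈ Submodule.span R {alg (x * (y : R))} *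
        Submodule.span R ({w, c} : Set (FractionRing R)) := by
    intro z hz
    refine Submodule.mul_induction_on hz ?_ ?_
    · intro g hg d hd
      obtain ⟨p, hp, q, hq, rfl⟩ := Submodule.mem_sup.mp hg
      obtain ⟨α, rfl⟩ := Ideal.mem_span_singleton'.mp hp
      obtain ⟨β, rfl⟩ := Ideal.mem_span_singleton'.mp hq
      obtain ⟨e, he⟩ := Ideal.mem_span_singleton'.mp hd.1
      obtain ⟨a, ha⟩ := Ideal.mem_span_singleton'.mp hd.2
      have hac : alg a * c = alg e * w := by
        apply mul_left_cancel₀ hyK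
        have h1 : alg (y:R) * (alg a * c) = alg d * c := by
          rw [← ha]; push_cast [map_mul]; ring
        have h2 : alg (y:R) * (alg e * w) = alg d * c := by
          rw [← he]; push_cast [map_mul]
          linear_combination alg e * hkey
        rw [h1, h2]
      obtain ⟨ρ, hρ⟩ := H a (by
        rw [hac, ← Algebra.smul_def]
        exact Submodule.smul_mem _ e (Submodule.mem_span_singleton_self w))
      have hcalc : u * w * alg ((α * x + β * (y:R)) * d) =
          alg (x * (y:R)) * (alg (ρ * α) * w + alg (ρ * β) * c) := by
        rw [← ha]
        push_cast [map_mul, map_add]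
        linear_combination (alg α * alg x * alg (y:R) * w + alg β * alg (y:R) * alg (y:R) * w) * hρ
          + alg ρ * alg β * alg (y:R) * hkey
      rw [hcalc]
      refine Submodule.mul_mem_mul (Submodule.mem_span_singleton_self _) ?_
      refine add_mem ?_ ?_
      · rw [← Algebra.smul_def]
        exact Submodule.smul_mem _ _ (Submodule.subset_span (by simp))
      · rw [← Algebra.smul_def]
        exact Submodule.smul_mem _ _ (Submodule.subset_span (by simp))
    · intro z1 z2 h1 h2
      rw [map_add, mul_add]
      exact add_mem h1 h2
  have hxyJ : x * (y : R) ∈ (Ideal.span {x} ⊔ Ideal.span {(y : R)}) *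
      (Ideal.span {x} ⊓ Ideal.span {(y : R)}) := by
    rw [Ideal.sup_mul_inf]
    exact Ideal.mul_mem_mul (Ideal.mem_span_singleton_self x)
      (Ideal.mem_span_singleton_self (y : R))
  have hfin := main _ hxyJ
  obtain ⟨n, hn, hne⟩ := Submodule.mem_span_singleton_mul.mp hfin
  have hxyK : alg (x * (y : R)) ≠ 0 := by
    rw [map_mul]; exact mul_ne_zero hxK hyK
  have : n = u * w := by
    apply mul_left_cancel₀ hxyK
    rw [hne]; ring
  rwa [← this]

end Aux

section Aux2

variable {R : Type*} [CommRing R] [IsDomain R] [IsDedekindDomain R]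

local notation "K" => FractionRing R
local notation "alg" => algebraMap R (FractionRing R)

lemma main_mem (B C M : Submodule R (FractionRing R)) (hB : B ≠ ⊥)
    (q0 : FractionRing R) (hq0 : q0 ≠ 0) (hq0B : ∀ b ∈ B, q0 * b ∈ C)
    (hM : ∀ q : FractionRing R, (∀ b ∈ B, q * b ∈ C) → ∀ b ∈ B, q * b ∈ M)
    {c : FractionRing R} (hc : c ∈ C) : c ∈ M := by
  by_cases hc0 : c = 0
  · simpa [hc0] using M.zero_mem
  obtain ⟨b0, hb0B, hb0⟩ := (Submodule.ne_bot_iff B).mp hB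
  set B'' : Submodule R K := Submodule.span R {q0} * B with hB''
  set J : Ideal R := B''.colon (Submodule.span R {c}) with hJdef
  have hw0mem : q0 * b0 ∈ B'' :=
    Submodule.mul_mem_mul (Submodule.mem_span_singleton_self q0) hb0B
  have hq0b0 : q0 * b0 ≠ 0 := mul_ne_zero hq0 hb0
  -- J is nonzero
  have hJne : J ≠ ⊥ := by
    obtain ⟨⟨x0, y0⟩, h⟩ := IsLocalization.surj R⁰ (c / (q0 * b0))
    refine (Submodule.ne_bot_iff J).mpr ⟨(y0 : R), ?_, nonZeroDivisors.coe_ne_zero y0⟩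
    rw [hJdef, Submodule.mem_colon_span_singleton, Algebra.smul_def]
    have hkey : alg (y0 : R) * c = alg x0 * (q0 * b0) := by
      field_simp at h
      linear_combination h
    rw [hkey, ← Algebra.smul_def]
    exact Submodule.smul_mem _ _ hw0mem
  have hJf : (J : FractionalIdeal R⁰ (FractionRing R)) ≠ 0 :=
    (FractionalIdeal.coeIdeal_ne_zero).mpr hJne
  have hinv : (J : FractionalIdeal R⁰ (FractionRing R)) *
      (J : FractionalIdeal R⁰ (FractionRing R))⁻¹ = 1 :=
    mul_inv_cancel₀ hJf
  -- 1 ∈ coe J * coe J⁻¹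
  have hone : (1 : K) ∈ ((J : FractionalIdeal R⁰ (FractionRing R)) : Submodule R K) *
      (((J : FractionalIdeal R⁰ (FractionRing R))⁻¹ :
        FractionalIdeal R⁰ (FractionRing R)) : Submodule R K) := by
    rw [← FractionalIdeal.coe_mul, hinv, FractionalIdeal.coe_one]
    exact Submodule.one_le.mp le_rfl
  -- membership machinery: u ∈ coe J⁻¹ multiplies J into R
  have humem : ∀ u ∈ (((J : FractionalIdeal R⁰ (FractionRing R))⁻¹ :
      FractionalIdeal R⁰ (FractionRing R)) : Submodule R K),
      ∀ a ∈ J, ∃ ρ : R, u * alg a = alg ρ := by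
    intro u hu a ha
    have : u * alg a ∈ (((J : FractionalIdeal R⁰ (FractionRing R))⁻¹ :
        FractionalIdeal R⁰ (FractionRing R)) : Submodule R K) *
        ((J : FractionalIdeal R⁰ (FractionRing R)) : Submodule R K) :=
      Submodule.mul_mem_mul hu (FractionalIdeal.mem_coeIdeal_of_mem _ ha)
    rw [← FractionalIdeal.coe_mul, mul_comm, hinv, FractionalIdeal.coe_one] at this
    obtain ⟨ρ, hρ⟩ := Submodule.mem_one.mp this
    exact ⟨ρ, hρ.symm⟩
  -- c ∈ coe J⁻¹ * B''
  have hc1 : c ∈ (((J : FractionalIdeal R⁰ (FractionRing R))⁻¹ :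
      FractionalIdeal R⁰ (FractionRing R)) : Submodule R K) * B'' := by
    have h2 : (1 : K) * c ∈ (((J : FractionalIdeal R⁰ (FractionRing R)) : Submodule R K) *
        (((J : FractionalIdeal R⁰ (FractionRing R))⁻¹ :
          FractionalIdeal R⁰ (FractionRing R)) : Submodule R K)) * Submodule.span R {c} :=
      Submodule.mul_mem_mul hone (Submodule.mem_span_singleton_self c)
    rw [one_mul] at h2
    have h3 : (((J : FractionalIdeal R⁰ (FractionRing R)) : Submodule R K) *
        (((J : FractionalIdeal R⁰ (FractionRing R))⁻¹ :
          FractionalIdeal R⁰ (FractionRing R)) : Submodule R K)) * Submodule.span R {c} =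
        (((J : FractionalIdeal R⁰ (FractionRing R))⁻¹ :
          FractionalIdeal R⁰ (FractionRing R)) : Submodule R K) *
        (((J : FractionalIdeal R⁰ (FractionRing R)) : Submodule R K) *
          Submodule.span R {c}) := by ring
    rw [h3] at h2
    refine SetLike.le_def.mp (mul_le_mul_right ?_ _) h2
    -- coe J * span{c} ≤ B''
    rw [Submodule.mul_le]
    intro z hz v hv
    obtain ⟨r, hrJ, rfl⟩ := (FractionalIdeal.mem_coeIdeal R⁰).mp hz
    obtain ⟨s, rfl⟩ := Submodule.mem_span_singleton.mp hv
    have hrc : r • c ∈ B'' := Submodule.mem_colon_span_singleton.mp hrJ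
    have heq : alg r * (s • c) = s • (r • c) := by
      rw [Algebra.smul_def r c, Algebra.smul_def s, Algebra.smul_def s]
      ring
    rw [heq]
    exact Submodule.smul_mem _ _ hrc
  -- finally: coe J⁻¹ * B'' ≤ M
  have hfinal : (((J : FractionalIdeal R⁰ (FractionRing R))⁻¹ :
      FractionalIdeal R⁰ (FractionRing R)) : Submodule R K) * B'' ≤ M := by
    rw [Submodule.mul_le]
    intro u hu z hz
    rw [hB''] at hz
    obtain ⟨b, hbB, rfl⟩ := Submodule.mem_span_singleton_mul.mp hz
    -- show u * (q0 * b) ∈ M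
    have hD : ∀ b' ∈ B, (u * q0) * b' ∈ C := by
      intro b' hb'
      by_cases hwb : q0 * b' = 0
      · rw [mul_assoc, hwb, mul_zero]
        exact C.zero_mem
      · have hwC : q0 * b' ∈ C := hq0B b' hb'
        have hL1 : u * (q0 * b') ∈ Submodule.span R ({q0 * b', c} : Set K) := by
          refine L1' hwb hc0 ?_
          intro a haw
          refine humem u hu a ?_
          rw [hJdef, Submodule.mem_colon_span_singleton, Algebra.smul_def]
          have hsub : Submodule.span R ({q0 * b'} : Set K) ≤ B'' := by
            rw [Submodule.span_le, Set.singleton_subset_iff]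
            exact Submodule.mul_mem_mul (Submodule.mem_span_singleton_self q0) hb'
          exact hsub haw
        have hspan : Submodule.span R ({q0 * b', c} : Set K) ≤ C := by
          rw [Submodule.span_le]
          rintro v (rfl | rfl)
          exacts [hwC, hc]
        rw [mul_assoc]
        exact hspan hL1
    have := hM (u * q0) hD b hbB
    rwa [mul_assoc] at this
  exact hfinal hc1


end Aux2

section Aux3

variable {R : Type*} [CommRing R] [IsDomain R] [IsDedekindDomain R]

local notation "K" => FractionRing R
local notation "alg" => algebraMap R (FractionRing R)

/-- Every `R`-linear map from a submodule of the fraction field to the fraction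
field is multiplication by a fixed element. -/
lemma hom_eq_mul (B : Submodule R (FractionRing R)) (f : B →ₗ[R] FractionRing R)
    {b0 : FractionRing R} (hb0B : b0 ∈ B) (hb0 : b0 ≠ 0) :
    ∀ b (hb : b ∈ B), f ⟨b, hb⟩ = (f ⟨b0, hb0B⟩ / b0) * b := by
  intro b hb
  obtain ⟨⟨x, y⟩, hxy⟩ := IsLocalization.surj R⁰ b
  obtain ⟨⟨x0, y0⟩, hxy0⟩ := IsLocalization.surj R⁰ b0
  have hy : alg (y : R) ≠ 0 := IsFractionRing.to_map_ne_zero_of_mem_nonZeroDivisors y.2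
  have hy0 : alg (y0 : R) ≠ 0 := IsFractionRing.to_map_ne_zero_of_mem_nonZeroDivisors y0.2
  have hx0 : alg x0 ≠ 0 := by
    rw [← hxy0]
    exact mul_ne_zero hb0 hy0
  have hsm : ((y : R) * x0) • (⟨b, hb⟩ : B) = ((y0 : R) * x) • (⟨b0, hb0B⟩ : B) := by
    apply Subtype.ext
    show ((y : R) * x0) • b = ((y0 : R) * x) • b0
    rw [Algebra.smul_def, Algebra.smul_def, map_mul, map_mul]
    linear_combination alg x0 * hxy - alg x * hxy0
  have hf := congrArg f hsm
  rw [map_smul, map_smul] at hf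
  have hf' : alg ((y : R) * x0) * f ⟨b, hb⟩ = alg ((y0 : R) * x) * f ⟨b0, hb0B⟩ := by
    rw [← Algebra.smul_def, ← Algebra.smul_def, hf]
  have hb' : alg (y : R) * b = alg x := by linear_combination hxy
  have hb0' : alg (y0 : R) * b0 = alg x0 := by linear_combination hxy0
  rw [map_mul, map_mul] at hf'
  rw [div_mul_eq_mul_div, eq_div_iff hb0]
  apply mul_left_cancel₀ (mul_ne_zero hy hy0)
  linear_combination hf' + (alg (y:R) * f ⟨b, hb⟩) * hb0' - (alg (y0:R) * f ⟨b0, hb0B⟩) * hb'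
end Aux3


/-- Over a Dedekind domain `R`, if `B` and `C` are nonzero
`R`-submodules of the fraction field and there is an injective `R`-linear map
`B → C`, then the evaluation map `Hom_R(B,C) ⊗_R B → C` is surjective, i.e. `C`
is `B`-generated. -/
theorem stmt1 (R : Type*) [CommRing R] [IsDomain R] [IsDedekindDomain R]
    (B C : Submodule R (FractionRing R)) (hB : B ≠ ⊥) (hC : C ≠ ⊥)
    (hinj : ∃ f : B →ₗ[R] C, Function.Injective f) :
    Function.Surjective
      (TensorProduct.lift (LinearMap.id : (B →ₗ[R] C) →ₗ[R] (B →ₗ[R] C)) :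
        (B →ₗ[R] C) ⊗[R] B →ₗ[R] C) := by
  classical
  obtain ⟨f, hf⟩ := hinj
  set ev : (B →ₗ[R] C) ⊗[R] B →ₗ[R] C :=
    TensorProduct.lift (LinearMap.id : (B →ₗ[R] C) →ₗ[R] (B →ₗ[R] C)) with hev
  intro c
  -- the image submodule in the fraction field
  set M : Submodule R (FractionRing R) := (LinearMap.range ev).map C.subtype with hM
  obtain ⟨b0, hb0B, hb0⟩ := (Submodule.ne_bot_iff B).mp hB
  set g : B →ₗ[R] FractionRing R := C.subtype.comp f with hg
  have hgb0 : g ⟨b0, hb0B⟩ ≠ 0 := by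
    intro h
    have : f ⟨b0, hb0B⟩ = 0 := by
      apply Subtype.ext
      simpa [hg] using h
    have := hf (a₁ := ⟨b0, hb0B⟩) (a₂ := 0) (by simpa using this)
    exact hb0 (by simpa using congrArg Subtype.val this)
  set q0 : FractionRing R := g ⟨b0, hb0B⟩ / b0 with hq0def
  have hq0 : q0 ≠ 0 := div_ne_zero hgb0 hb0
  have hrep := hom_eq_mul B g hb0B hb0
  have hq0B : ∀ b ∈ B, q0 * b ∈ C := by
    intro b hb
    rw [← hrep b hb]
    exact (f ⟨b, hb⟩).2
  have hMmem : ∀ q : FractionRing R, (∀ b ∈ B, q * b ∈ C) → ∀ b ∈ B, q * b ∈ M := by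
    intro q hq b hb
    set φ : B →ₗ[R] C :=
      { toFun := fun z => ⟨q * (z : FractionRing R), hq z z.2⟩
        map_add' := by
          intro z1 z2
          apply Subtype.ext
          simp [mul_add]
        map_smul' := by
          intro r z
          apply Subtype.ext
          simp [Algebra.smul_def]
          ring } with hφ
    refine ⟨φ ⟨b, hb⟩, ⟨φ ⊗ₜ[R] ⟨b, hb⟩, ?_⟩, rfl⟩
    simp [hev]
  have hcM : (c : FractionRing R) ∈ M :=
    main_mem B C M hB q0 hq0 hq0B hMmem c.2
  obtain ⟨c', hc'range, hval⟩ := hcM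
  obtain ⟨wit, hwit⟩ := hc'range
  exact ⟨wit, by rw [hwit]; exact Subtype.ext hval⟩
end

section
/- Let R be a Dedekind domain, p a nonzero prime ideal of R, and let B ≤ C be nonzero R-submodules of the fraction field Q. Then the localization at p of the evaluation map Hom_R(B,C) ⊗_R B → C is surjective. -/
open TensorProduct

lemma memColonSpanSingleton {R M : Type*} [CommRing R] [AddCommGroup M] [Module R M]
    (N : Submodule R M) (x : M) (r : R) :
    r ∈ N.colon (Submodule.span R {x} : Set M) ↔ r • x ∈ N := by
  constructor
  · intro h
    exact Submodule.mem_colon.mp h x (Submodule.mem_span_singleton_self x)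
  · intro h
    refine Submodule.mem_colon.mpr ?_
    intro y hy
    obtain ⟨c, rfl⟩ := Submodule.mem_span_singleton.mp hy
    rw [smul_comm]
    exact N.smul_mem c h

section Helpers

variable {R : Type*} [CommRing R] [IsDomain R] [IsDedekindDomain R]
variable {p : Ideal R}

/-- Local-global principle for membership in a submodule of the fraction field. -/
lemma memOfLocal (C : Submodule R (FractionRing R)) (x : FractionRing R)
    (h : ∀ ℓ : Ideal R, ℓ.IsMaximal → ∃ t ∉ ℓ, t • x ∈ C) : x ∈ C := by
  by_contra hx
  have hI : C.colon (Submodule.span R {x}) ≠ ⊤ := by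
    intro hT
    have h1 : (1:R) ∈ C.colon (Submodule.span R {x}) := by rw [hT]; trivial
    exact hx (by simpa using (memColonSpanSingleton C x 1).mp h1)
  obtain ⟨ℓ, hℓ, hle⟩ := Ideal.exists_le_maximal _ hI
  obtain ⟨t, ht, htx⟩ := h ℓ hℓ
  exact ht (hle ((memColonSpanSingleton C x t).mpr htx))

lemma existsFactor (hp : p.IsPrime) (hp0 : p ≠ ⊥) (I : Ideal R) (hI : I ≠ ⊥) :
    ∃ (e : ℕ) (J : Ideal R) (s : R), I = p ^ e * J ∧ s ∈ J ∧ s ∉ p := by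
  have hirr : Irreducible p := (Ideal.prime_of_isPrime hp0 hp).irreducible
  obtain ⟨e, J, hnd, hJ⟩ := WfDvdMonoid.max_power_factor hI hirr
  have hnle : ¬ J ≤ p := fun h => hnd (Ideal.dvd_iff_le.mpr h)
  obtain ⟨s, hs, hsp⟩ := SetLike.not_le_iff_exists.mp hnle
  exact ⟨e, J, s, hJ, hs, hsp⟩

lemma existsRel (u v : FractionRing R) (hv : v ≠ 0) :
    ∃ a d : R, d ≠ 0 ∧ d • u = a • v := by
  obtain ⟨⟨a₁, d₁⟩, h₁⟩ := IsLocalization.surj (nonZeroDivisors R) u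
  obtain ⟨⟨a₂, d₂⟩, h₂⟩ := IsLocalization.surj (nonZeroDivisors R) v
  have hd₁ : (d₁ : R) ≠ 0 := nonZeroDivisors.coe_ne_zero d₁
  have hd₂0 : algebraMap R (FractionRing R) (d₂ : R) ≠ 0 := by
    simpa [IsFractionRing.to_map_eq_zero_iff] using nonZeroDivisors.coe_ne_zero d₂
  have ha₂ : (a₂ : R) ≠ 0 := by
    intro h
    rw [h, map_zero] at h₂
    exact hv (by
      have := mul_eq_zero.mp h₂
      tauto)
  refine ⟨a₁ * d₂, a₂ * d₁, mul_ne_zero ha₂ hd₁, ?_⟩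
  rw [Algebra.smul_def, Algebra.smul_def, map_mul, map_mul]
  calc algebraMap R _ (a₂:R) * algebraMap R _ (d₁:R) * u
      = algebraMap R _ (a₂:R) * (u * algebraMap R _ (d₁:R)) := by ring
    _ = algebraMap R _ (a₂:R) * algebraMap R _ a₁ := by rw [h₁]
    _ = algebraMap R _ a₁ * (v * algebraMap R _ (d₂:R)) := by rw [h₂]; ring
    _ = algebraMap R _ a₁ * algebraMap R _ (d₂:R) * v := by ring

lemma dichotomy (hp : p.IsPrime) (hp0 : p ≠ ⊥) (u v : FractionRing R)
    (hu : u ≠ 0) (hv : v ≠ 0) :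
    (∃ t ∉ p, ∃ r : R, t • u = r • v) ∨ (∃ t ∉ p, ∃ r ∈ p, t • v = r • u) := by
  obtain ⟨a, d, hd, hrel⟩ := existsRel u v hv
  have ha : a ≠ 0 := by
    intro h
    rw [h, zero_smul] at hrel
    exact hu (by simpa [smul_eq_zero, hd] using hrel)
  have hrel' : algebraMap R _ d * u = algebraMap R _ a * v := by
    simpa [Algebra.smul_def] using hrel
  obtain ⟨e₁, J₁, s₁, hJ₁, hs₁, hs₁p⟩ := existsFactor hp hp0 (Ideal.span {a})
    (by simpa [Ideal.span_singleton_eq_bot] using ha)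
  obtain ⟨e₂, J₂, s₂, hJ₂, hs₂, hs₂p⟩ := existsFactor hp hp0 (Ideal.span {d})
    (by simpa [Ideal.span_singleton_eq_bot] using hd)
  have hd0 : algebraMap R (FractionRing R) d ≠ 0 := by
    simpa [IsFractionRing.to_map_eq_zero_iff] using hd
  have ha0 : algebraMap R (FractionRing R) a ≠ 0 := by
    simpa [IsFractionRing.to_map_eq_zero_iff] using ha
  rcases le_or_gt e₂ e₁ with hee | hee
  · -- `a * s₂ ∈ (d)`
    left
    have hmem : a * s₂ ∈ Ideal.span {a} * J₂ :=
      Ideal.mul_mem_mul (Ideal.mem_span_singleton_self a) hs₂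
    have heq : Ideal.span {a} * J₂ = (p ^ (e₁ - e₂) * J₁) * Ideal.span {d} := by
      have hpow : p ^ e₁ = p ^ (e₁ - e₂) * p ^ e₂ := by
        rw [← pow_add, Nat.sub_add_cancel hee]
      rw [hJ₁, hJ₂, hpow]; ring
    rw [heq] at hmem
    obtain ⟨r, hr⟩ := Ideal.mem_span_singleton'.mp (Ideal.mul_le_right hmem)
    refine ⟨s₂, hs₂p, r, ?_⟩
    have hr' : algebraMap R (FractionRing R) r * algebraMap R _ d
        = algebraMap R _ a * algebraMap R _ s₂ := by
      rw [← map_mul, ← map_mul, hr]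
    rw [Algebra.smul_def, Algebra.smul_def]
    have key : algebraMap R (FractionRing R) d *
        (algebraMap R _ s₂ * u - algebraMap R _ r * v) = 0 := by
      linear_combination algebraMap R (FractionRing R) s₂ * hrel' - v * hr'
    exact sub_eq_zero.mp ((mul_eq_zero.mp key).resolve_left hd0)
  · right
    have hmem : d * s₁ ∈ Ideal.span {d} * J₁ :=
      Ideal.mul_mem_mul (Ideal.mem_span_singleton_self d) hs₁
    have heq : Ideal.span {d} * J₁ = (p ^ (e₂ - e₁ - 1) * J₂) * (p * Ideal.span {a}) := by
      have hpow : p ^ e₂ = p ^ (e₂ - e₁ - 1) * p * p ^ e₁ := by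
        rw [mul_assoc, ← pow_succ', ← pow_add]
        congr 1
        omega
      rw [hJ₁, hJ₂, hpow]; ring
    rw [heq] at hmem
    have hmem' : d * s₁ ∈ p * Ideal.span {a} := Ideal.mul_le_right hmem
    rw [mul_comm p _] at hmem'
    obtain ⟨r, hrp, hr⟩ := Ideal.mem_span_singleton_mul.mp hmem'
    refine ⟨s₁, hs₁p, r, hrp, ?_⟩
    have hr' : algebraMap R (FractionRing R) a * algebraMap R _ r
        = algebraMap R _ d * algebraMap R _ s₁ := by
      rw [← map_mul, ← map_mul, hr]
    rw [Algebra.smul_def, Algebra.smul_def]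
    have key : algebraMap R (FractionRing R) a *
        (algebraMap R _ s₁ * v - algebraMap R _ r * u) = 0 := by
      linear_combination (-(algebraMap R (FractionRing R) s₁)) * hrel' - u * hr'
    exact sub_eq_zero.mp ((mul_eq_zero.mp key).resolve_left ha0)

lemma descent (hp : p.IsPrime) (hp0 : p ≠ ⊥) (B : Submodule R (FractionRing R))
    (hstep : ∀ b₀ ∈ B, b₀ ≠ 0 → ∃ b ∈ B, b ≠ 0 ∧ ∃ t ∉ p, ∃ r ∈ p, t • b₀ = r • b)
    (n : ℕ) :
    ∀ b₀ ∈ B, b₀ ≠ 0 → ∃ b ∈ B, b ≠ 0 ∧ ∃ t ∉ p, ∃ x ∈ p ^ n, t • b₀ = x • b := by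
  induction n with
  | zero =>
    intro b₀ hb₀ hb₀0
    refine ⟨b₀, hb₀, hb₀0, 1, ?_, 1, ?_, rfl⟩
    · exact fun h => hp.ne_top (Ideal.eq_top_of_isUnit_mem _ h isUnit_one)
    · simp
  | succ n ih =>
    intro b₀ hb₀ hb₀0
    obtain ⟨b₁, hb₁, hb₁0, t₁, ht₁, x₁, hx₁, heq₁⟩ := ih b₀ hb₀ hb₀0
    obtain ⟨b₂, hb₂, hb₂0, t₂, ht₂, r, hr, heq₂⟩ := hstep b₁ hb₁ hb₁0
    refine ⟨b₂, hb₂, hb₂0, t₂ * t₁, ?_, x₁ * r, ?_, ?_⟩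
    · exact fun h => (hp.mem_or_mem h).elim ht₂ ht₁
    · rw [pow_succ]; exact Ideal.mul_mem_mul hx₁ hr
    · rw [mul_smul, heq₁, smul_comm, heq₂, smul_comm, ← mul_smul, mul_comm r x₁]

/-- The core verification: under the divisibility data, `q * b ∈ C` for all `b ∈ B`. -/
lemma common (hp : p.IsPrime) (hp0 : p ≠ ⊥) (B C : Submodule R (FractionRing R))
    (hBC : B ≤ C) (a d s : R) (hd : d ≠ 0) (e : ℕ) (J : Ideal R)
    (hfac : (Ideal.span {d}).colon (Ideal.span {a}) = p ^ e * J) (hsJ : s ∈ J)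
    (q : FractionRing R)
    (hq : q = algebraMap R (FractionRing R) (s * a) / algebraMap R (FractionRing R) d)
    (hploc : ∀ b ∈ B, ∃ t ∉ p, t • (q * b) ∈ C) :
    ∀ b ∈ B, q * b ∈ C := by
  have hpmax : p.IsMaximal := hp.isMaximal hp0
  have hd0 : algebraMap R (FractionRing R) d ≠ 0 := by
    simpa [IsFractionRing.to_map_eq_zero_iff] using hd
  intro b hb
  apply memOfLocal
  intro ℓ hℓ
  by_cases hlp : ℓ = p
  · subst hlp; exact hploc b hb
  · -- choose t₀ ∈ p \ ℓ
    have hnle : ¬ p ≤ ℓ := by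
      intro h
      exact hlp (hpmax.eq_of_le hℓ.ne_top h).symm
    obtain ⟨t₀, ht₀p, ht₀ℓ⟩ := SetLike.not_le_iff_exists.mp hnle
    have htℓ : t₀ ^ e ∉ ℓ := fun h => ht₀ℓ (hℓ.isPrime.mem_of_pow_mem e h)
    have hmem : t₀ ^ e * s ∈ (Ideal.span {d}).colon (Ideal.span {a}) := by
      rw [hfac]; exact Ideal.mul_mem_mul (Ideal.pow_mem_pow ht₀p e) hsJ
    have hmul : (t₀ ^ e * s) * a ∈ Ideal.span {d} := by
      have := (memColonSpanSingleton (Ideal.span {d}) a (t₀ ^ e * s)).mp hmem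
      simpa [smul_eq_mul] using this
    obtain ⟨r, hr⟩ := Ideal.mem_span_singleton'.mp hmul
    refine ⟨t₀ ^ e, htℓ, ?_⟩
    have hqt : (t₀ ^ e) • (q * b) = r • b := by
      have hr' : algebraMap R (FractionRing R) r * algebraMap R _ d
          = algebraMap R _ (t₀ ^ e) * algebraMap R _ (s * a) := by
        rw [← map_mul, ← map_mul, hr]; ring_nf
      rw [map_pow, map_mul] at hr'
      rw [Algebra.smul_def, Algebra.smul_def, hq]
      field_simp
      rw [map_pow, map_mul]
      linear_combination (-b) * hr'
    rw [hqt]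
    exact C.smul_mem r (hBC hb)

lemma mainLemma (hp : p.IsPrime) (hp0 : p ≠ ⊥) (B C : Submodule R (FractionRing R))
    (hB : B ≠ ⊥) (hBC : B ≤ C) (c : FractionRing R) (hcC : c ∈ C) (hc0 : c ≠ 0) :
    ∃ s : R, s ∉ p ∧ ∃ q : FractionRing R,
      (∀ b ∈ B, q * b ∈ C) ∧ ∃ b₀ ∈ B, q * b₀ = s • c := by
  have hone : (1 : R) ∉ p := fun h => hp.ne_top (Ideal.eq_top_of_isUnit_mem _ h isUnit_one)
  obtain ⟨b₀, hb₀B, hb₀0, hcases⟩ : ∃ b₀ ∈ B, b₀ ≠ 0 ∧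
      ((∀ b ∈ B, ∃ t ∉ p, ∃ r : R, t • b = r • b₀) ∨
       (∀ b₁ ∈ B, b₁ ≠ 0 → ∃ b ∈ B, b ≠ 0 ∧ ∃ t ∉ p, ∃ r ∈ p, t • b₁ = r • b)) := by
    by_cases hcase : ∃ b₀ ∈ B, b₀ ≠ 0 ∧ ∀ b ∈ B, ∃ t ∉ p, ∃ r : R, t • b = r • b₀
    · obtain ⟨b₀, h1, h2, h3⟩ := hcase; exact ⟨b₀, h1, h2, Or.inl h3⟩
    · push_neg at hcase
      obtain ⟨b₀, hb₀B, hb₀0⟩ := (Submodule.ne_bot_iff B).mp hB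
      refine ⟨b₀, hb₀B, hb₀0, Or.inr ?_⟩
      intro b₁ hb₁ hb₁0
      obtain ⟨b, hbB, hbad⟩ := hcase b₁ hb₁ hb₁0
      have hb0 : b ≠ 0 := by
        rintro rfl
        exact hbad 1 hone 0 (by simp)
      rcases dichotomy hp hp0 b b₁ hb0 hb₁0 with ⟨t, ht, r, hEq⟩ | ⟨t, ht, r, hrp, hEq⟩
      · exact absurd hEq (hbad t ht r)
      · exact ⟨b, hbB, hb0, t, ht, r, hrp, hEq⟩
  obtain ⟨a, d, hd, hrel⟩ := existsRel c b₀ hb₀0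
  have ha : a ≠ 0 := by
    rintro rfl
    rw [zero_smul] at hrel
    exact hc0 (by simpa [smul_eq_zero, hd] using hrel)
  have hrel' : algebraMap R (FractionRing R) d * c = algebraMap R _ a * b₀ := by
    simpa [Algebra.smul_def] using hrel
  have hd0 : algebraMap R (FractionRing R) d ≠ 0 := by
    simpa [IsFractionRing.to_map_eq_zero_iff] using hd
  have hdI : d ∈ (Ideal.span {d}).colon (Ideal.span {a}) :=
    (memColonSpanSingleton (Ideal.span {d}) a d).mpr (by
      rw [smul_eq_mul, mul_comm]
      exact Ideal.mul_mem_left _ a (Ideal.mem_span_singleton_self d))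
  obtain ⟨e, J, s, hfac, hsJ, hsp⟩ := existsFactor hp hp0
      ((Ideal.span {d}).colon (Ideal.span {a})) (by
    intro h
    rw [h] at hdI
    exact hd (by simpa using hdI))
  set q : FractionRing R :=
    algebraMap R (FractionRing R) (s * a) / algebraMap R (FractionRing R) d with hq
  have hqb₀ : q * b₀ = s • c := by
    rw [Algebra.smul_def, hq, map_mul]
    field_simp
    linear_combination (-(algebraMap R (FractionRing R) s)) * hrel'
  have hploc : ∀ b ∈ B, ∃ t ∉ p, t • (q * b) ∈ C := by
    rcases hcases with hPos | hNeg
    · intro b hb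
      obtain ⟨t, ht, r, htr⟩ := hPos b hb
      refine ⟨t, ht, ?_⟩
      have htr' : algebraMap R (FractionRing R) t * b = algebraMap R _ r * b₀ := by
        simpa [Algebra.smul_def] using htr
      have hkey : t • (q * b) = r • (q * b₀) := by
        rw [Algebra.smul_def, Algebra.smul_def,
          show algebraMap R (FractionRing R) t * (q * b)
            = q * (algebraMap R (FractionRing R) t * b) from by ring, htr']
        ring
      rw [hkey, hqb₀]
      exact C.smul_mem r (C.smul_mem s hcC)
    · intro b hb
      by_cases hb0 : b = 0
      · exact ⟨1, hone, by rw [hb0, mul_zero, smul_zero]; exact C.zero_mem⟩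
      obtain ⟨e₂, J₂, s₂, hJ₂, hs₂, hs₂p⟩ := existsFactor hp hp0 (Ideal.span {d})
        (by simpa [Ideal.span_singleton_eq_bot] using hd)
      obtain ⟨u, huB, hu0, t₁, ht₁, x, hx, hxe⟩ := descent hp hp0 B hNeg e₂ b hb hb0
      have hxd : x * s₂ ∈ Ideal.span {d} := by
        rw [hJ₂]; exact Ideal.mul_mem_mul hx hs₂
      obtain ⟨r', hr'⟩ := Ideal.mem_span_singleton'.mp hxd
      refine ⟨s₂ * t₁, fun h => (hp.mem_or_mem h).elim hs₂p ht₁, ?_⟩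
      have hxe' : algebraMap R (FractionRing R) t₁ * b = algebraMap R _ x * u := by
        simpa [Algebra.smul_def] using hxe
      have hr'' : algebraMap R (FractionRing R) r' * algebraMap R _ d
          = algebraMap R _ x * algebraMap R _ s₂ := by
        rw [← map_mul, ← map_mul, hr']
      have key : (s₂ * t₁) • (q * b) = (r' * (s * a)) • u := by
        rw [Algebra.smul_def, Algebra.smul_def, hq, map_mul, map_mul, map_mul]
        field_simp
        rw [map_mul]
        linear_combination algebraMap R (FractionRing R) s₂ * algebraMap R _ s *
            algebraMap R _ a * hxe' - algebraMap R _ s * algebraMap R _ a * u * hr''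
      rw [key]
      exact C.smul_mem _ (hBC huB)
  exact ⟨s, hsp, q, common hp hp0 B C hBC a d s hd e J hfac hsJ q hq hploc, b₀, hb₀B, hqb₀⟩

end Helpers

/-- Let `R` be a Dedekind domain, `p` a nonzero prime ideal and
`B ≤ C` nonzero `R`-submodules of the fraction field `Q`.  Then the localization
at `p` of the evaluation map `Hom_R(B,C) ⊗_R B → C` is surjective. -/
theorem stmt2 (R : Type*) [CommRing R] [IsDomain R] [IsDedekindDomain R]
    (p : Ideal R) [hp : p.IsPrime] (hp0 : p ≠ ⊥)
    (B C : Submodule R (FractionRing R)) (hB : B ≠ ⊥) (hC : C ≠ ⊥) (hBC : B ≤ C) :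
    Function.Surjective
      (LocalizedModule.map p.primeCompl
        (TensorProduct.lift (LinearMap.id : (B →ₗ[R] C) →ₗ[R] (B →ₗ[R] C)) :
          (B →ₗ[R] C) ⊗[R] B →ₗ[R] C)) := by
  intro z
  obtain ⟨⟨m, σ⟩, rfl⟩ : ∃ y : C × p.primeCompl, LocalizedModule.mk y.1 y.2 = z := by
    induction z using LocalizedModule.induction_on with
    | _ m s => exact ⟨(m, s), rfl⟩
  by_cases hm : (m : FractionRing R) = 0
  · have hm0 : m = 0 := Subtype.ext hm
    refine ⟨0, ?_⟩
    rw [hm0, map_zero, LocalizedModule.zero_mk]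
  · obtain ⟨s, hsp, q, hqmem, b₀, hb₀B, hqb₀⟩ :=
      mainLemma hp hp0 B C hB hBC (m : FractionRing R) m.2 hm
    let f : B →ₗ[R] C :=
      { toFun := fun b => ⟨q * (b : FractionRing R), hqmem b b.2⟩
        map_add' := fun x y => Subtype.ext (by simp [mul_add])
        map_smul' := fun r x => Subtype.ext (by
          simp only [SetLike.val_smul, RingHom.id_apply]
          rw [Algebra.smul_def, Algebra.smul_def]
          ring) }
    refine ⟨LocalizedModule.mk (f ⊗ₜ[R] (⟨b₀, hb₀B⟩ : B)) (⟨s, hsp⟩ * σ), ?_⟩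
    rw [LocalizedModule.map_mk]
    have hf : (TensorProduct.lift (LinearMap.id : (B →ₗ[R] C) →ₗ[R] (B →ₗ[R] C)))
        (f ⊗ₜ[R] (⟨b₀, hb₀B⟩ : B)) = s • m := by
      apply Subtype.ext
      simpa [f, TensorProduct.lift.tmul] using hqb₀
    rw [hf]
    have := LocalizedModule.mk_cancel_common_left (⟨s, hsp⟩ : p.primeCompl) σ m
    simpa [Submonoid.smul_def] using this
end

section
/- Let A be a finite rank torsion-free module over a Dedekind domain with a direct decomposition A = B ⊕ C where B has rank 1 and there is a monomorphism B → ⟨a⟩_* for every nonzero a ∈ A. Then every pure submodule K of A is A-generated. -/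
open TensorProduct

universe u

/-- A submodule `K ≤ A` is pure iff `A ⧸ K` is torsion-free, i.e.
`r • x ∈ K` with `r ≠ 0` implies `x ∈ K`. -/
def IsPureSubmodule (R : Type*) {A : Type*} [CommRing R] [AddCommGroup A]
    [Module R A] (K : Submodule R A) : Prop :=
  ∀ (r : R) (x : A), r ≠ 0 → r • x ∈ K → x ∈ K

/-- `K` is `A`-generated: some direct sum of copies of `A` surjects onto `K`. -/
def ModGenerated (R : Type*) {A : Type u} [CommRing R] [AddCommGroup A]
    [Module R A] (K : Submodule R A) : Prop :=
  ∃ (ι : Type u) (f : (ι →₀ A) →ₗ[R] K), Function.Surjective f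

/-- `A` is a self-pure-generator: every pure submodule of `A` is `A`-generated. -/
def SelfPureGenerator (R : Type*) (A : Type u) [CommRing R] [AddCommGroup A]
    [Module R A] : Prop :=
  ∀ K : Submodule R A, IsPureSubmodule R K → ModGenerated R K

section Stmt6Infra
namespace Stmt6Infra
open IsDedekindDomain IsDedekindDomain.HeightOneSpectrum Multiplicative
set_option linter.unusedSectionVars false
set_option maxHeartbeats 1000000

variable {R : Type*} [CommRing R] [IsDomain R] [IsDedekindDomain R]

open Classical in
lemma ival_le_iff_dvd_imp (w : HeightOneSpectrum R) (a c : R) (hc : c ≠ 0) :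
    w.intValuationDef a ≤ w.intValuationDef c ↔
      ∀ n : ℕ, w.asIdeal ^ n ∣ Ideal.span {c} → w.asIdeal ^ n ∣ Ideal.span {a} := by
  constructor
  · intro h n hn
    rw [← intValuation_le_pow_iff_dvd] at hn ⊢
    exact le_trans h hn
  · intro h
    set n := (Associates.mk w.asIdeal).count (Associates.mk (Ideal.span {c})).factors with hn
    have hcval : w.intValuationDef c = ↑(ofAdd (-(n:ℤ))) := by
      rw [w.intValuationDef_if_neg hc]; rfl
    have h1 : w.asIdeal ^ n ∣ Ideal.span {c} := by
      rw [← intValuation_le_pow_iff_dvd]; exact le_of_eq hcval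
    have h2 := h n h1
    rw [← intValuation_le_pow_iff_dvd] at h2
    rw [hcval]; exact h2

-- L3
lemma ival_eq_one_of_not_mem (w : HeightOneSpectrum R) {s : R} (hs : s ∉ w.asIdeal) :
    w.intValuationDef s = 1 := by
  have hle := w.intValuation_le_one s
  rcases lt_or_eq_of_le hle with hlt | heq
  · exfalso
    rw [w.intValuation_lt_one_iff_dvd, Ideal.dvd_span_singleton] at hlt
    exact hs hlt
  · exact heq

-- L1core
lemma exists_mul_eq_of_ival_le (w : HeightOneSpectrum R) {a c : R} (hc : c ≠ 0)
    (h : w.intValuationDef a ≤ w.intValuationDef c) :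
    ∃ s r : R, s ∉ w.asIdeal ∧ s * a = r * c := by
  have hdvd := (ival_le_iff_dvd_imp w a c hc).mp h
  classical
  set n := (Associates.mk w.asIdeal).count (Associates.mk (Ideal.span {c})).factors with hn
  have hcval : w.intValuationDef c = ↑(ofAdd (-(n:ℤ))) := by
    rw [w.intValuationDef_if_neg hc]; rfl
  have h1 : w.asIdeal ^ n ∣ Ideal.span {c} := by
    rw [← intValuation_le_pow_iff_dvd]; exact le_of_eq hcval
  have h2 : ¬ w.asIdeal ^ (n+1) ∣ Ideal.span {c} := by
    rw [← intValuation_le_pow_iff_dvd, intValuation_apply, hcval, WithZero.exp_eq_coe_ofAdd, WithZero.coe_le_coe]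
    simp only [ofAdd_le, not_le]
    push_cast
    omega
  obtain ⟨J0, hJ0⟩ := id h1
  have hJ0w : ¬ J0 ≤ w.asIdeal := by
    intro hle
    apply h2
    rw [hJ0, pow_succ]
    exact mul_dvd_mul_left _ (Ideal.dvd_iff_le.mpr hle)
  obtain ⟨s, hsJ, hsw⟩ := SetLike.not_le_iff_exists.mp hJ0w
  obtain ⟨M, hM⟩ := hdvd n h1
  have hsa : s * a ∈ Ideal.span {c} := by
    have h3 : s * a ∈ J0 * (w.asIdeal ^ n * M) := by
      apply Ideal.mul_mem_mul hsJ
      rw [← hM]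
      exact Ideal.mem_span_singleton_self a
    have h4 : J0 * (w.asIdeal ^ n * M) = Ideal.span {c} * M := by
      rw [hJ0]; ring
    rw [h4] at h3
    exact Ideal.mul_le_left h3
  rw [Ideal.mem_span_singleton] at hsa
  obtain ⟨r, hr⟩ := hsa
  exact ⟨s, r, hsw, by rw [hr]; ring⟩

variable (Qf : Type*) [Field Qf] [Algebra R Qf] [IsFractionRing R Qf]

-- L1
lemma exists_smul_eq_of_val_le (w : HeightOneSpectrum R) {x y : Qf} (hy : y ≠ 0)
    (h : w.valuation Qf x ≤ w.valuation Qf y) :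
    ∃ s r : R, s ∉ w.asIdeal ∧ algebraMap R Qf s * x = algebraMap R Qf r * y := by
  by_cases hx : x = 0
  · exact ⟨1, 0, fun h1 => w.isPrime.ne_top ((Ideal.eq_top_iff_one _).mpr h1),
      by simp [hx]⟩
  obtain ⟨⟨a, u⟩, hau : IsLocalization.mk' Qf a u = x⟩ := IsLocalization.mk'_surjective (nonZeroDivisors R) x
  obtain ⟨⟨b, v⟩, hbv : IsLocalization.mk' Qf b v = y⟩ := IsLocalization.mk'_surjective (nonZeroDivisors R) y
  have hvalx : w.valuation Qf x = w.intValuation a / w.intValuation (u : R) := by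
    rw [← hau, valuation_of_mk']
  have hvaly : w.valuation Qf y = w.intValuation b / w.intValuation (v : R) := by
    rw [← hbv, valuation_of_mk']
  have hu0 : w.intValuation (u : R) ≠ 0 := by
    rw [intValuation_apply]; exact w.intValuation_ne_zero' u
  have hv0 : w.intValuation (v : R) ≠ 0 := by
    rw [intValuation_apply]; exact w.intValuation_ne_zero' v
  have hcross : w.intValuation (a * (v:R)) ≤ w.intValuation (b * (u:R)) := by
    rw [map_mul, map_mul]
    rw [hvalx, hvaly, div_le_div_iff₀ (lt_of_le_of_ne zero_le' (Ne.symm hu0))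
      (lt_of_le_of_ne zero_le' (Ne.symm hv0))] at h
    exact h
  have hbu : b * (u:R) ≠ 0 := by
    have hb : b ≠ 0 := by
      intro hb0; apply hy; rw [← hbv, hb0, IsLocalization.mk'_zero]
    exact mul_ne_zero hb (nonZeroDivisors.coe_ne_zero u)
  obtain ⟨s, r, hsw, heq⟩ := exists_mul_eq_of_ival_le w hbu hcross
  refine ⟨s, r, hsw, ?_⟩
  have hux : x * algebraMap R Qf (u : R) = algebraMap R Qf a := by
    rw [← hau]; exact IsLocalization.mk'_spec _ a u
  have hvy : y * algebraMap R Qf (v : R) = algebraMap R Qf b := by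
    rw [← hbv]; exact IsLocalization.mk'_spec _ b v
  have huv0 : algebraMap R Qf ((u:R) * (v:R)) ≠ 0 := by
    rw [map_mul]
    exact mul_ne_zero (IsFractionRing.to_map_ne_zero_of_mem_nonZeroDivisors u.2)
      (IsFractionRing.to_map_ne_zero_of_mem_nonZeroDivisors v.2)
  apply mul_right_cancel₀ huv0
  calc algebraMap R Qf s * x * algebraMap R Qf ((u:R) * (v:R))
      = algebraMap R Qf s * (x * algebraMap R Qf (u:R)) * algebraMap R Qf (v:R) := by
        rw [map_mul]; ring
    _ = algebraMap R Qf (s * (a * (v:R))) := by rw [hux, map_mul, map_mul]; ring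
    _ = algebraMap R Qf (r * (b * (u:R))) := by rw [heq]
    _ = algebraMap R Qf r * (y * algebraMap R Qf (v:R)) * algebraMap R Qf (u:R) := by
        rw [hvy, map_mul, map_mul]; ring
    _ = algebraMap R Qf r * y * algebraMap R Qf ((u:R) * (v:R)) := by
        rw [map_mul]; ring

-- L2'
lemma exists_val_eq_prescribed (w : HeightOneSpectrum R) (g : ℤ) :
    ∃ t : Qf, t ≠ 0 ∧ w.valuation Qf t = ↑(ofAdd g) ∧
      ∀ w' : HeightOneSpectrum R, w' ≠ w → w'.valuation Qf (t : Qf) ≤ 1 := by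
  obtain ⟨π, hπ⟩ := w.intValuation_exists_uniformizer
  have hπ0 : π ≠ 0 := by
    intro h0
    rw [h0, map_zero] at hπ
    exact WithZero.zero_ne_coe hπ
  by_cases hg : 0 ≤ g
  case neg =>
    -- g < 0 : t = algebraMap (π ^ (-g).toNat)
    push_neg at hg
    refine ⟨algebraMap R Qf (π ^ (-g).toNat), ?_, ?_, ?_⟩
    · exact IsFractionRing.to_map_ne_zero_of_mem_nonZeroDivisors
        (mem_nonZeroDivisors_of_ne_zero (pow_ne_zero _ hπ0))
    · rw [valuation_of_algebraMap, map_pow, hπ, WithZero.exp_eq_coe_ofAdd, ← WithZero.coe_pow,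
        WithZero.coe_inj, ← ofAdd_nsmul]
      congr 1
      simp only [nsmul_eq_mul, mul_neg, mul_one]
      rw [Int.toNat_of_nonneg (by omega)]
      omega
    · intro w' _
      exact w'.valuation_le_one _
  case pos =>
    set m := g.toNat with hm
    have hgm : g = (m : ℤ) := (Int.toNat_of_nonneg hg).symm
    have hπdvd : w.asIdeal ∣ Ideal.span {π} := by
      have := (w.intValuation_le_pow_iff_dvd π 1).mp (by rw [hπ]; norm_num)
      rwa [pow_one] at this
    obtain ⟨J1, hJ1⟩ := hπdvd
    have hwJ1 : ¬ w.asIdeal ∣ J1 := by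
      intro hdvd
      have h2 : w.asIdeal ^ 2 ∣ Ideal.span {π} := by
        rw [hJ1, pow_two]
        exact mul_dvd_mul_left _ hdvd
      rw [← w.intValuation_le_pow_iff_dvd π 2, hπ, WithZero.exp_le_exp] at h2
      omega
    have hwprime : Prime w.asIdeal := (Ideal.prime_iff_isPrime w.ne_bot).mpr w.isPrime
    have hJ1m : ¬ J1 ^ m ≤ w.asIdeal := by
      intro hle
      exact hwJ1 (hwprime.dvd_of_dvd_pow (Ideal.dvd_iff_le.mpr hle))
    obtain ⟨s₀, hs₀J, hs₀w⟩ := SetLike.not_le_iff_exists.mp hJ1m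
    have hc0 : π ^ m ≠ 0 := pow_ne_zero _ hπ0
    have hs₀0 : s₀ ≠ 0 := fun h0 => hs₀w (h0 ▸ w.asIdeal.zero_mem)
    have hspanc : Ideal.span {π ^ m} = w.asIdeal ^ m * J1 ^ m := by
      rw [← Ideal.span_singleton_pow, hJ1, mul_pow]
    refine ⟨IsLocalization.mk' Qf s₀ ⟨π ^ m, mem_nonZeroDivisors_of_ne_zero hc0⟩, ?_, ?_, ?_⟩
    · intro h0
      have hspec := IsLocalization.mk'_spec Qf s₀ ⟨π ^ m, mem_nonZeroDivisors_of_ne_zero hc0⟩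
      rw [h0, zero_mul] at hspec
      exact hs₀0 (IsFractionRing.injective R Qf (by rw [← hspec, map_zero]))
    · rw [valuation_of_mk']
      have h1 : w.intValuation s₀ = 1 := by
        rw [intValuation_apply]; exact ival_eq_one_of_not_mem w hs₀w
      have h2 : w.intValuation (π ^ m) = ↑(ofAdd (-(m : ℤ))) := by
        rw [map_pow, hπ, WithZero.exp_eq_coe_ofAdd, ← WithZero.coe_pow, WithZero.coe_inj,
          ← ofAdd_nsmul]
        congr 1
        simp [nsmul_eq_mul]
      rw [h1, h2, hgm, one_div, ← WithZero.coe_inv, WithZero.coe_inj, ← ofAdd_neg, neg_neg]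
    · intro w' hw'
      rw [valuation_of_mk']
      have hc0' : w'.intValuation (π ^ m) ≠ 0 := by
        rw [intValuation_apply]
        exact w'.intValuation_ne_zero _ hc0
      rw [div_le_one₀ (lt_of_le_of_ne zero_le' (Ne.symm hc0'))]
      rw [intValuation_apply, intValuation_apply]
      rw [ival_le_iff_dvd_imp w' s₀ (π ^ m) hc0]
      intro j hj
      rw [hspanc] at hj
      have hw'w : ¬ w'.asIdeal ∣ w.asIdeal ^ m := by
        intro hdvd
        have hprime' : Prime w'.asIdeal := (Ideal.prime_iff_isPrime w'.ne_bot).mpr w'.isPrime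
        have h3 : w'.asIdeal ∣ w.asIdeal := hprime'.dvd_of_dvd_pow hdvd
        have h4 : w.asIdeal ≤ w'.asIdeal := Ideal.dvd_iff_le.mp h3
        have h5 : w.asIdeal = w'.asIdeal :=
          (w.isPrime.isMaximal w.ne_bot).eq_of_le w'.isPrime.ne_top h4
        exact hw' (HeightOneSpectrum.ext h5.symm)
      have hprime' : Prime w'.asIdeal := (Ideal.prime_iff_isPrime w'.ne_bot).mpr w'.isPrime
      have h6 : w'.asIdeal ^ j ∣ J1 ^ m := hprime'.pow_dvd_of_dvd_mul_left j hw'w hj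
      exact dvd_trans h6 (Ideal.dvd_iff_le.mpr ((Ideal.span_singleton_le_iff_mem _).mpr hs₀J))

-- H1
lemma mem_of_forall_maximal (M : Submodule R Qf) (x : Qf)
    (h : ∀ L : Ideal R, L.IsMaximal → ∃ s : R, s ∉ L ∧ s • x ∈ M) : x ∈ M := by
  have hI : (M.colon (Submodule.span R {x})) = ⊤ := by
    by_contra hne
    obtain ⟨L, hLmax, hIL⟩ := Ideal.exists_le_maximal _ hne
    obtain ⟨s, hsL, hsx⟩ := h L hLmax
    apply hsL
    apply hIL
    rw [Submodule.mem_colon]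
    intro p hp
    obtain ⟨r, rfl⟩ := Submodule.mem_span_singleton.mp hp
    rw [smul_comm]
    exact Submodule.smul_mem _ r hsx
  have h1 : (1 : R) ∈ M.colon (Submodule.span R {x}) := hI ▸ Submodule.mem_top
  simpa using Submodule.mem_colon.mp h1 x (Submodule.mem_span_singleton_self x)

-- main local lemma
lemma main_local (B' X' : Submodule R Qf) (h1B : (1:Qf) ∈ B') (h1X : (1:Qf) ∈ X')
    (q₀ : Qf) (hq₀ : q₀ ≠ 0) (hq₀B : ∀ b ∈ B', q₀ * b ∈ X')
    (P : Ideal R) (hP : P.IsMaximal) :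
    ∃ s : R, s ∉ P ∧ ∃ q : Qf, (∀ b ∈ B', q * b ∈ X') ∧ ∃ b ∈ B', q * b = algebraMap R Qf s := by
  by_cases hPbot : P = ⊥
  · -- easy case : R is a field-ish; use numerator of q₀
    obtain ⟨⟨a, u⟩, hau : IsLocalization.mk' Qf a u = q₀⟩ := IsLocalization.mk'_surjective (nonZeroDivisors R) q₀
    have ha0 : a ≠ 0 := by
      intro h0; apply hq₀; rw [← hau, h0, IsLocalization.mk'_zero]
    refine ⟨a, by simp [hPbot, ha0], q₀, hq₀B, (u:R) • (1:Qf), B'.smul_mem _ h1B, ?_⟩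
    rw [Algebra.smul_def, mul_one, ← hau]
    exact IsLocalization.mk'_spec _ a u
  · set w : HeightOneSpectrum R := ⟨P, hP.isPrime, hPbot⟩ with hw
    have hwP : w.asIdeal = P := rfl
    -- any other maximal ideal is nonzero too
    have hLbot : ∀ L : Ideal R, L.IsMaximal → L ≠ ⊥ := by
      intro L hL hL0
      rw [hL0] at hL
      exact hPbot ((hL.eq_of_le hP.ne_top bot_le).symm)
    obtain ⟨ε, hε⟩ := WithZero.ne_zero_iff_exists.mp
      ((Valuation.ne_zero_iff _).mpr hq₀ : w.valuation Qf q₀ ≠ 0)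
    set Pred : ℤ → Prop := fun γ => ∃ b, b ∈ B' ∧ b ≠ 0 ∧ w.valuation Qf b = ↑(ofAdd γ) with hPred
    have hPred0 : Pred 0 := ⟨1, h1B, one_ne_zero, by simp⟩
    by_cases hbdd : ∃ bound : ℤ, ∀ γ, Pred γ → γ ≤ bound
    · -- bounded case
      obtain ⟨g₁, hPg₁, hmax⟩ := Int.exists_greatest_of_bdd hbdd ⟨0, hPred0⟩
      obtain ⟨b₁, hb₁B, hb₁0, hb₁val⟩ := hPg₁
      obtain ⟨t, ht0, htval, hother⟩ := exists_val_eq_prescribed Qf w (-(toAdd ε + g₁))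
      set q : Qf := q₀ * t with hq
      have hq0 : q ≠ 0 := mul_ne_zero hq₀ ht0
      have key1 : ∀ b, b ∈ B' → w.valuation Qf (q * b) ≤ 1 := by
        intro b hb
        by_cases hb0 : b = 0
        · simp [hb0]
        obtain ⟨γb, hγb⟩ := WithZero.ne_zero_iff_exists.mp
          ((Valuation.ne_zero_iff _).mpr hb0 : w.valuation Qf b ≠ 0)
        have hle : toAdd γb ≤ g₁ := hmax _ ⟨b, hb, hb0, by rw [← hγb]; simp⟩
        have : w.valuation Qf (q * b) = ↑(ε * ofAdd (-(toAdd ε + g₁)) * γb) := by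
          rw [hq, map_mul, map_mul, ← hε, htval, ← hγb, ← WithZero.coe_mul, ← WithZero.coe_mul]
        rw [this, ← WithZero.coe_one, WithZero.coe_le_coe]
        have : toAdd (ε * ofAdd (-(toAdd ε + g₁)) * γb) ≤ toAdd (1 : Multiplicative ℤ) := by
          simp only [toAdd_mul, toAdd_ofAdd, toAdd_one]
          omega
        exact this
      have hqB : ∀ b ∈ B', q * b ∈ X' := by
        intro b hb
        apply mem_of_forall_maximal
        intro L hLmax
        set w' : HeightOneSpectrum R := ⟨L, hLmax.isPrime, hLbot L hLmax⟩ with hw'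
        by_cases hww' : w' = w
        · -- L = P
          have hval : w.valuation Qf (q * b) ≤ w.valuation Qf (1:Qf) := by
            rw [map_one]; exact key1 b hb
          obtain ⟨s, r, hsw, heq⟩ := exists_smul_eq_of_val_le Qf w one_ne_zero hval
          refine ⟨s, ?_, ?_⟩
          · rw [← hww'] at hsw; exact hsw
          · rw [Algebra.smul_def, heq, mul_one, ← mul_one (algebraMap R Qf r),
              ← Algebra.smul_def]
            exact X'.smul_mem r h1X
        · -- L ≠ P
          have hval : w'.valuation Qf t ≤ w'.valuation Qf (1:Qf) := by
            rw [map_one]; exact hother w' hww'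
          obtain ⟨s, r, hsw, heq⟩ := exists_smul_eq_of_val_le Qf w' one_ne_zero hval
          refine ⟨s, hsw, ?_⟩
          rw [Algebra.smul_def]
          have : algebraMap R Qf s * (q * b) = algebraMap R Qf r * (q₀ * b) := by
            rw [hq]
            calc algebraMap R Qf s * (q₀ * t * b) = (algebraMap R Qf s * t) * (q₀ * b) := by ring
              _ = algebraMap R Qf r * (q₀ * b) := by rw [heq, mul_one]
          rw [this, ← Algebra.smul_def]
          exact X'.smul_mem r (hq₀B b hb)
      -- now produce the witness b
      have hc0 : q * b₁ ≠ 0 := mul_ne_zero hq0 hb₁0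
      have hcval : w.valuation Qf (1:Qf) ≤ w.valuation Qf (q * b₁) := by
        have : w.valuation Qf (q * b₁) = ↑(ε * ofAdd (-(toAdd ε + g₁)) * ofAdd g₁) := by
          rw [hq, map_mul, map_mul, ← hε, htval, hb₁val, ← WithZero.coe_mul, ← WithZero.coe_mul]
        rw [map_one, this, ← WithZero.coe_one, WithZero.coe_le_coe]
        have : toAdd (1 : Multiplicative ℤ) ≤ toAdd (ε * ofAdd (-(toAdd ε + g₁)) * ofAdd g₁) := by
          simp only [toAdd_mul, toAdd_ofAdd, toAdd_one]
          omega
        exact this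
      obtain ⟨s, r, hsw, heq⟩ := exists_smul_eq_of_val_le Qf w hc0 hcval
      refine ⟨s, hsw, q, hqB, r • b₁, B'.smul_mem r hb₁B, ?_⟩
      rw [Algebra.smul_def]
      calc q * (algebraMap R Qf r * b₁) = algebraMap R Qf r * (q * b₁) := by ring
        _ = algebraMap R Qf s := by rw [← heq, mul_one]
    · -- unbounded case
      push_neg at hbdd
      obtain ⟨γ, hPγ, hγ⟩ := hbdd (-(toAdd ε))
      obtain ⟨b₁, hb₁B, hb₁0, hb₁val⟩ := hPγ
      have hc0 : q₀ * b₁ ≠ 0 := mul_ne_zero hq₀ hb₁0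
      have hcval : w.valuation Qf (1:Qf) ≤ w.valuation Qf (q₀ * b₁) := by
        have : w.valuation Qf (q₀ * b₁) = ↑(ε * ofAdd γ) := by
          rw [map_mul, ← hε, hb₁val, ← WithZero.coe_mul]
        rw [map_one, this, ← WithZero.coe_one, WithZero.coe_le_coe]
        have : toAdd (1 : Multiplicative ℤ) ≤ toAdd (ε * ofAdd γ) := by
          simp only [toAdd_mul, toAdd_ofAdd, toAdd_one]
          omega
        exact this
      obtain ⟨s, r, hsw, heq⟩ := exists_smul_eq_of_val_le Qf w hc0 hcval
      refine ⟨s, hsw, q₀, hq₀B, r • b₁, B'.smul_mem r hb₁B, ?_⟩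
      rw [Algebra.smul_def]
      calc q₀ * (algebraMap R Qf r * b₁) = algebraMap R Qf r * (q₀ * b₁) := by ring
        _ = algebraMap R Qf s := by rw [← heq, mul_one]

-- core globalization
lemma core_one_mem (B' X' : Submodule R Qf) (h1B : (1:Qf) ∈ B') (h1X : (1:Qf) ∈ X')
    (q₀ : Qf) (hq₀ : q₀ ≠ 0) (hq₀B : ∀ b ∈ B', q₀ * b ∈ X') (S : Submodule R Qf)
    (hS : ∀ q : Qf, (∀ b ∈ B', q * b ∈ X') → ∀ b ∈ B', q * b ∈ S) : (1:Qf) ∈ S := by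
  set I : Ideal R := S.comap (Algebra.linearMap R Qf) with hI
  have htop : I = ⊤ := by
    by_contra hne
    obtain ⟨P, hPmax, hIP⟩ := Ideal.exists_le_maximal I hne
    obtain ⟨s, hsP, q, hq, b, hbB, hqb⟩ := main_local Qf B' X' h1B h1X q₀ hq₀ hq₀B P hPmax
    apply hsP
    apply hIP
    have : algebraMap R Qf s ∈ S := by rw [← hqb]; exact hS q hq b hbB
    simpa [hI] using this
  have h1 : (1:R) ∈ I := htop ▸ trivial
  have := Submodule.mem_comap.mp h1
  simpa using this

-- generic embedding of an essentially-rank-1 torsion-free module into the fraction field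
lemma exists_embedding {M : Type*} [AddCommGroup M] [Module R M] [NoZeroSMulDivisors R M]
    (e : M) (he : e ≠ 0) (hrel : ∀ x : M, ∃ r s : R, r ≠ 0 ∧ r • x = s • e) :
    ∃ ψ : M →ₗ[R] Qf, Function.Injective ψ ∧ ψ e = 1 ∧
      ∀ (x : M) (r s : R), r • x = s • e →
        algebraMap R Qf r * ψ x = algebraMap R Qf s := by
  classical
  choose rf sf hrf hxf using hrel
  set ψ₀ : M → Qf := fun x => algebraMap R Qf (sf x) / algebraMap R Qf (rf x) with hψ₀
  have halg : ∀ r : R, r ≠ 0 → algebraMap R Qf r ≠ 0 := fun r hr =>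
    IsFractionRing.to_map_ne_zero_of_mem_nonZeroDivisors (mem_nonZeroDivisors_of_ne_zero hr)
  have hchar : ∀ (x : M) (r s : R), r • x = s • e →
      algebraMap R Qf r * ψ₀ x = algebraMap R Qf s := by
    intro x r s hre
    have h1 : (r * sf x) • e = (rf x * s) • e := by
      rw [mul_smul, mul_smul, ← hxf x, ← hre, smul_comm]
    have h2 : r * sf x = rf x * s := by
      have := sub_eq_zero.mpr h1
      rw [← sub_smul] at this
      rcases smul_eq_zero.mp this with h | h
      · exact sub_eq_zero.mp h
      · exact absurd h he
    have h0 : algebraMap R Qf (rf x) ≠ 0 := halg _ (hrf x)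
    show algebraMap R Qf r * (algebraMap R Qf (sf x) / algebraMap R Qf (rf x)) = algebraMap R Qf s
    rw [mul_div_assoc', div_eq_iff h0, ← map_mul, ← map_mul]
    congr 1
    rw [h2]; ring
  -- linearity
  have hadd : ∀ x y : M, ψ₀ (x + y) = ψ₀ x + ψ₀ y := by
    intro x y
    have hx := hxf x; have hy := hxf y
    have hxy : (rf x * rf y) • (x + y) = (rf y * sf x + rf x * sf y) • e := by
      rw [smul_add, add_smul]
      congr 1
      · rw [mul_comm, mul_smul, hx, smul_smul]
      · rw [mul_smul, hy, smul_smul]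
    have h := hchar (x + y) _ _ hxy
    have hcx := hchar x _ _ hx
    have hcy := hchar y _ _ hy
    have h0x : algebraMap R Qf (rf x) ≠ 0 := halg _ (hrf x)
    have h0y : algebraMap R Qf (rf y) ≠ 0 := halg _ (hrf y)
    have h0xy : algebraMap R Qf (rf x * rf y) ≠ 0 := by
      rw [map_mul]; exact mul_ne_zero h0x h0y
    apply mul_left_cancel₀ h0xy
    calc algebraMap R Qf (rf x * rf y) * ψ₀ (x + y)
        = algebraMap R Qf (rf y * sf x + rf x * sf y) := h
      _ = algebraMap R Qf (rf y) * (algebraMap R Qf (rf x) * ψ₀ x)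
          + algebraMap R Qf (rf x) * (algebraMap R Qf (rf y) * ψ₀ y) := by
          rw [hcx, hcy, map_add, map_mul, map_mul]
      _ = algebraMap R Qf (rf x * rf y) * (ψ₀ x + ψ₀ y) := by
          rw [map_mul]; ring
  have hsmul : ∀ (c : R) (x : M), ψ₀ (c • x) = c • ψ₀ x := by
    intro c x
    have hx := hxf x
    have hcx : rf x • (c • x) = (c * sf x) • e := by
      rw [smul_comm, hx, mul_smul]
    have h := hchar (c • x) _ _ hcx
    have h0x : algebraMap R Qf (rf x) ≠ 0 := halg _ (hrf x)
    apply mul_left_cancel₀ h0x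
    rw [h, map_mul, Algebra.smul_def]
    rw [← hchar x _ _ hx]
    ring
  set ψ : M →ₗ[R] Qf := ⟨⟨ψ₀, by intro x y; exact hadd x y⟩, by intro c x; exact hsmul c x⟩
    with hψ
  have hinj : Function.Injective ψ := by
    intro x y hxy
    have h1 := hchar x _ _ (hxf x)
    have h2 := hchar y _ _ (hxf y)
    -- use ψ (x - y) = 0
    have hz : ψ (x - y) = 0 := by rw [map_sub]; show ψ₀ x - ψ₀ y = 0; rw [show ψ₀ x = ψ₀ y from hxy]; ring
    have hzre := hxf (x - y)
    have h3 := hchar (x - y) _ _ hzre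
    rw [show ψ₀ (x-y) = ψ (x-y) from rfl, hz, mul_zero] at h3
    have hs0 : sf (x - y) = 0 := by
      have := h3.symm
      exact (map_eq_zero_iff _ (IsFractionRing.injective R Qf)).mp this
    rw [hs0, zero_smul] at hzre
    have := smul_eq_zero.mp hzre
    rcases this with h | h
    · exact absurd h (hrf (x-y))
    · exact sub_eq_zero.mp h
  have hone : ψ e = 1 := by
    have := hchar e 1 1 rfl
    rw [map_one, one_mul] at this
    exact this
  exact ⟨ψ, hinj, hone, fun x r s h => hchar x r s h⟩

end Stmt6Infra
end Stmt6Infra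


section Stmt6Aux
open Stmt6Infra

set_option linter.unusedSectionVars false
set_option maxHeartbeats 2000000

variable {R : Type*} [CommRing R] [IsDomain R] [IsDedekindDomain R]

lemma exists_gen_rel {A : Type u} [AddCommGroup A] [Module R A] [NoZeroSMulDivisors R A]
    (B : Submodule R A) (hrkB : Module.rank R B = 1) :
    ∃ b₀ : B, b₀ ≠ 0 ∧ ∀ b : B, ∃ r s : R, r ≠ 0 ∧ r • b = s • b₀ := by
  have hnt : Nontrivial B := by
    by_contra hsub
    rw [not_nontrivial_iff_subsingleton] at hsub
    rw [rank_zero_iff.mpr hsub] at hrkB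
    exact zero_ne_one hrkB
  obtain ⟨b₀, hb₀⟩ := exists_ne (0 : B)
  refine ⟨b₀, hb₀, fun b => ?_⟩
  by_contra hno
  push_neg at hno
  have hind : LinearIndependent R ![b₀, b] := by
    rw [LinearIndependent.pair_iff]
    intro s t hst
    by_cases ht : t = 0
    · rw [ht, zero_smul, add_zero] at hst
      rcases smul_eq_zero.mp hst with h | h
      · exact ⟨h, ht⟩
      · exact absurd h hb₀
    · exfalso
      have : t • b = (-s) • b₀ := by
        rw [neg_smul, eq_neg_iff_add_eq_zero, add_comm]
        exact hst
      exact hno t (-s) ht this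
  have h2 := hind.cardinal_lift_le_rank
  rw [Cardinal.mk_fin, hrkB] at h2
  norm_num at h2

end Stmt6Aux

/-- Let `A` be a finite rank torsion-free module over a Dedekind
domain with a direct decomposition `A = B ⊕ C` where `B` has rank `1` and there
is a monomorphism `B → ⟨a⟩_*` for every nonzero `a ∈ A`.  Then every pure
submodule `K` of `A` is `A`-generated. -/
theorem stmt6 (R : Type*) [CommRing R] [IsDomain R] [IsDedekindDomain R]
    (A : Type u) [AddCommGroup A] [Module R A] [NoZeroSMulDivisors R A]
    (hfin : Module.rank R A < Cardinal.aleph0)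
    (B C : Submodule R A) (hcompl : IsCompl B C) (hrkB : Module.rank R B = 1)
    (hemb : ∀ a : A, a ≠ 0 → ∃ f : B →ₗ[R] (pureGen R a), Function.Injective f) :
    ∀ K : Submodule R A, IsPureSubmodule R K → ModGenerated R K := by
  classical
  intro K hK
  obtain ⟨b₀, hb₀, hrelB⟩ := exists_gen_rel B hrkB
  haveI : NoZeroSMulDivisors R B :=
    Function.Injective.noZeroSMulDivisors _ Subtype.val_injective rfl (fun _ _ => rfl)
  obtain ⟨β, hβinj, hβ1, hβchar⟩ := Stmt6Infra.exists_embedding (FractionRing R) b₀ hb₀ hrelB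
  set Qf := FractionRing R with hQf
  set πB := B.linearProjOfIsCompl C hcompl with hπB
  set T_K : Submodule R K := ⨆ (φ : A →ₗ[R] K), LinearMap.range φ with hT_K
  have halg : ∀ r : R, r ≠ 0 → algebraMap R Qf r ≠ 0 := fun r hr =>
    IsFractionRing.to_map_ne_zero_of_mem_nonZeroDivisors (mem_nonZeroDivisors_of_ne_zero hr)
  have hTK : ∀ k : K, k ∈ T_K := by
    intro k
    by_cases hk0 : (k : A) = 0
    · have : k = 0 := Subtype.ext hk0
      rw [this]; exact T_K.zero_mem
    have hXK : pureGen R (k : A) ≤ K := by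
      rintro x ⟨r, hr, s, hx⟩
      exact hK r x hr (by rw [hx]; exact K.smul_mem s k.2)
    have hkX : (k : A) ∈ pureGen R (k : A) := ⟨1, one_ne_zero, 1, rfl⟩
    have he : (⟨(k : A), hkX⟩ : pureGen R (k : A)) ≠ 0 :=
      fun h => hk0 (congrArg Subtype.val h)
    have hrelX : ∀ x : pureGen R (k : A), ∃ r s : R, r ≠ 0 ∧
        r • x = s • (⟨(k : A), hkX⟩ : pureGen R (k : A)) := by
      intro x
      obtain ⟨r, hr, s, hx⟩ := x.2
      exact ⟨r, s, hr, Subtype.ext hx⟩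
    haveI : NoZeroSMulDivisors R (pureGen R (k : A)) :=
      Function.Injective.noZeroSMulDivisors _ Subtype.val_injective rfl (fun _ _ => rfl)
    obtain ⟨ψ, hψinj, hψ1, hψchar⟩ :=
      Stmt6Infra.exists_embedding (FractionRing R) _ he hrelX
    obtain ⟨f₀, hf₀⟩ := hemb (k : A) hk0
    have hq₀ : ψ (f₀ b₀) ≠ 0 := by
      intro h0
      apply hb₀
      apply hf₀
      apply hψinj
      rw [h0, map_zero, map_zero]
    have h1B : (1 : Qf) ∈ LinearMap.range β := ⟨b₀, hβ1⟩
    have h1X : (1 : Qf) ∈ LinearMap.range ψ := ⟨_, hψ1⟩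
    have hcorr : ∀ b : B, ψ (f₀ b₀) * β b = ψ (f₀ b) := by
      intro b
      obtain ⟨r, s, hr, hrel⟩ := hrelB b
      have h1 : algebraMap R Qf r * β b = algebraMap R Qf s := hβchar b r s hrel
      have h2 : r • (f₀ b) = s • (f₀ b₀) := by rw [← map_smul, ← map_smul, hrel]
      have h3 : algebraMap R Qf r * ψ (f₀ b) = algebraMap R Qf s * ψ (f₀ b₀) := by
        have h4 := congrArg ψ h2
        rw [map_smul, map_smul, Algebra.smul_def, Algebra.smul_def] at h4
        exact h4
      apply mul_left_cancel₀ (halg r hr)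
      rw [h3, ← h1]; ring
    have hq₀B : ∀ y ∈ LinearMap.range β, ψ (f₀ b₀) * y ∈ LinearMap.range ψ := by
      rintro y ⟨b, rfl⟩
      exact ⟨f₀ b, (hcorr b).symm⟩
    set W : Submodule R (pureGen R (k : A)) := T_K.comap (Submodule.inclusion hXK) with hW
    have hS : ∀ q : Qf, (∀ y ∈ LinearMap.range β, q * y ∈ LinearMap.range ψ) →
        ∀ y ∈ LinearMap.range β, q * y ∈ W.map ψ := by
      intro q hq y hy
      obtain ⟨b, rfl⟩ := hy
      have hchoice : ∀ b : B, ∃ x : pureGen R (k : A), ψ x = q * β b :=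
        fun b => hq (β b) ⟨b, rfl⟩
      choose fq hfq using hchoice
      have hfqadd : ∀ b b' : B, fq (b + b') = fq b + fq b' := by
        intro b b'
        apply hψinj
        rw [map_add, hfq, hfq, hfq, map_add, mul_add]
      have hfqsmul : ∀ (c : R) (b : B), fq (c • b) = c • fq b := by
        intro c b
        apply hψinj
        rw [map_smul, hfq, hfq, map_smul, Algebra.smul_def, Algebra.smul_def]
        ring
      set fql : B →ₗ[R] pureGen R (k : A) :=
        { toFun := fq, map_add' := hfqadd, map_smul' := hfqsmul } with hfql
      set φq : A →ₗ[R] K := (Submodule.inclusion hXK).comp (fql.comp πB) with hφq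
      have hWb : fq b ∈ W := by
        show Submodule.inclusion hXK (fq b) ∈ T_K
        have heq : Submodule.inclusion hXK (fq b) = φq ((b : A)) := by
          rw [hφq]
          simp only [LinearMap.comp_apply]
          rw [hπB, show B.linearProjOfIsCompl C hcompl (b : A) = b from
            Submodule.projectionOnto_apply_left hcompl b]
          rfl
        rw [heq]
        exact le_iSup (fun φ : A →ₗ[R] K => LinearMap.range φ) φq ⟨(b : A), rfl⟩
      exact ⟨fq b, hWb, hfq b⟩
    have h1S : (1 : Qf) ∈ W.map ψ :=
      Stmt6Infra.core_one_mem Qf (LinearMap.range β) (LinearMap.range ψ) h1B h1X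
        (ψ (f₀ b₀)) hq₀ hq₀B (W.map ψ) hS
    obtain ⟨x, hxW, hx1⟩ := h1S
    have hxe : x = ⟨(k : A), hkX⟩ := hψinj (by rw [hx1, hψ1])
    rw [hxe] at hxW
    have hmem : Submodule.inclusion hXK (⟨(k : A), hkX⟩ : pureGen R (k : A)) ∈ T_K := hxW
    have hik : Submodule.inclusion hXK (⟨(k : A), hkX⟩ : pureGen R (k : A)) = k :=
      Subtype.ext rfl
    rwa [hik] at hmem
  -- final assembly : build the surjection
  have hC : ∀ k : K, ∃ (n : ℕ) (g : Fin n → (A →ₗ[R] K)) (aa : Fin n → A),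
      k = ∑ i, g i (aa i) := by
    intro k
    refine Submodule.iSup_induction (motive := fun x : K => ∃ (n : ℕ) (g : Fin n → (A →ₗ[R] K))
      (aa : Fin n → A), x = ∑ i, g i (aa i)) _ (hTK k) ?_ ?_ ?_
    · rintro φ x ⟨a, rfl⟩
      exact ⟨1, fun _ => φ, fun _ => a, by simp⟩
    · exact ⟨0, Fin.elim0, Fin.elim0, by simp⟩
    · rintro x y ⟨n, g, aa, rfl⟩ ⟨m, g', aa', rfl⟩
      refine ⟨n + m, Fin.addCases g g', Fin.addCases aa aa', ?_⟩
      rw [Fin.sum_univ_add]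
      congr 1 <;> apply Finset.sum_congr rfl <;> intro i _ <;>
        simp [Fin.addCases_left, Fin.addCases_right]
  choose nn gg av hsum using hC
  refine ⟨K × ℕ, Finsupp.lsum ℕ (fun p : K × ℕ =>
    if h : p.2 < nn p.1 then gg p.1 ⟨p.2, h⟩ else 0), ?_⟩
  intro k
  refine ⟨∑ i : Fin (nn k), Finsupp.single (k, (i : ℕ)) (av k i), ?_⟩
  rw [map_sum]
  have hterm : ∀ i : Fin (nn k),
      (Finsupp.lsum ℕ (fun p : K × ℕ =>
        if h : p.2 < nn p.1 then gg p.1 ⟨p.2, h⟩ else 0))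
        (Finsupp.single (k, (i : ℕ)) (av k i)) = gg k i (av k i) := by
    intro i
    rw [Finsupp.lsum_single]
    simp only [dif_pos i.isLt]
  rw [Finset.sum_congr rfl (fun i _ => hterm i)]
  exact (hsum k).symm
end

section
/- Let A be a finite rank torsion-free module over a Dedekind domain. Then IT(A^n) = IT(A) for every positive integer n, where IT denotes the inner type. -/
open TensorProduct

/-- For a finite rank torsion-free module `A` over a Dedekind
domain, `IT(A^n) = IT(A)` for every positive integer `n`.  Encoded: a rank-1
module `D` (nonzero submodule of the fraction field) is a lower bound for the
types of the nonzero elements of `A^n` iff it is one for `A`; two types are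
equal iff they have the same rank-1 lower bounds. -/
theorem stmt8 (R : Type*) [CommRing R] [IsDomain R] [IsDedekindDomain R]
    (A : Type*) [AddCommGroup A] [Module R A] [NoZeroSMulDivisors R A]
    (hfin : Module.rank R A < Cardinal.aleph0) (n : ℕ) (hn : 0 < n)
    (D : Submodule R (FractionRing R)) (hD : D ≠ ⊥) :
    (∀ x : Fin n → A, x ≠ 0 → ∃ f : D →ₗ[R] (pureGen R x), Function.Injective f) ↔
      (∀ a : A, a ≠ 0 → ∃ f : D →ₗ[R] (pureGen R a), Function.Injective f) := by
  classical
  constructor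
  · -- easy direction: embed via constant tuple
    intro h a ha
    set i0 : Fin n := ⟨0, hn⟩
    obtain ⟨f, hf⟩ := h (fun _ => a) (fun hx => ha (congrFun hx i0))
    have hmem : ∀ d : D, ((f d : Fin n → A) i0) ∈ pureGen R a := by
      intro d
      obtain ⟨r, hr, s, hrs⟩ := (f d).2
      exact ⟨r, hr, s, congrFun hrs i0⟩
    refine ⟨LinearMap.codRestrict (pureGen R a)
      ((LinearMap.proj i0 : (Fin n → A) →ₗ[R] A) ∘ₗ (pureGen R (fun _ => a)).subtype ∘ₗ f)
      (fun c => hmem c), ?_⟩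
    refine LinearMap.ker_eq_bot.mp (LinearMap.ker_eq_bot'.mpr fun d hd => ?_)
    have h0 : ((f d : Fin n → A) i0) = 0 := congrArg Subtype.val hd
    obtain ⟨r, hr, s, hrs⟩ := (f d).2
    have hs : s = 0 := by
      have h1 := congrFun hrs i0
      simp only [Pi.smul_apply] at h1
      rw [h0, smul_zero] at h1
      rcases smul_eq_zero.mp h1.symm with hc | hc
      · exact hc
      · exact absurd hc ha
    have hfd : (f d : Fin n → A) = 0 := by
      have h2 : r • (f d : Fin n → A) = 0 := by rw [hrs, hs, zero_smul]
      rcases smul_eq_zero.mp h2 with hc | hc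
      · exact absurd hc hr
      · exact hc
    exact hf ((Subtype.ext hfd).trans (map_zero f).symm)
  · -- hard direction
    intro h x hx
    obtain ⟨i0, hi0⟩ : ∃ i, x i ≠ 0 := by
      by_contra hc; push_neg at hc; exact hx (funext hc)
    obtain ⟨d0, hd0D, hd0⟩ := (Submodule.ne_bot_iff D).mp hD
    obtain ⟨⟨u, v⟩, huv⟩ := IsLocalization.surj (nonZeroDivisors R) d0
    have hv : (v : R) ≠ 0 := nonZeroDivisors.coe_ne_zero v
    have havK : algebraMap R (FractionRing R) (v : R) ≠ 0 := fun hc =>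
      hv ((map_eq_zero_iff _ (IsFractionRing.injective R (FractionRing R))).mp hc)
    have hu : u ≠ 0 := by
      intro hu0
      rw [hu0, map_zero] at huv
      rcases mul_eq_zero.mp huv with hc | hc
      · exact hd0 hc
      · exact havK hc
    have H : ∀ i : Fin n, ∃ (F : D →ₗ[R] A) (r s : R), r ≠ 0 ∧ s ≠ 0 ∧
        r • F ⟨d0, hd0D⟩ = s • x i ∧ (x i ≠ 0 → Function.Injective F) := by
      intro i
      by_cases hi : x i = 0
      · exact ⟨0, 1, 1, one_ne_zero, one_ne_zero, by simp [hi], fun hc => absurd hi hc⟩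
      · obtain ⟨f, hf⟩ := h (x i) hi
        obtain ⟨r, hr, s, hrs⟩ := (f ⟨d0, hd0D⟩).2
        refine ⟨(pureGen R (x i)).subtype ∘ₗ f, r, s, hr, ?_, hrs,
          fun _ => (Submodule.injective_subtype _).comp hf⟩
        intro hs0
        rw [hs0, zero_smul] at hrs
        rcases smul_eq_zero.mp hrs with hc | hc
        · exact hr hc
        · have h0 : f ⟨d0, hd0D⟩ = 0 := Subtype.ext hc
          have h1 := hf (h0.trans (map_zero f).symm)
          exact hd0 (by simpa using congrArg Subtype.val h1)
    choose F r s hr hs key hinj using H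
    set P : R := ∏ j, s j with hP
    set lam : Fin n → R := fun i => r i * ∏ j ∈ Finset.univ.erase i, s j with hlam
    have hlamne : ∀ i, lam i ≠ 0 := fun i =>
      mul_ne_zero (hr i) (Finset.prod_ne_zero_iff.mpr fun j _ => hs j)
    set g : D →ₗ[R] (Fin n → A) := LinearMap.pi (fun i => lam i • F i) with hg
    have hmem : ∀ d : D, g d ∈ pureGen R x := by
      intro d
      obtain ⟨⟨p, q⟩, hpq⟩ := IsLocalization.surj (nonZeroDivisors R) (d : FractionRing R)
      have hq : (q : R) ≠ 0 := nonZeroDivisors.coe_ne_zero q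
      have hkey : ((q : R) * u) • d = (p * (v : R)) • (⟨d0, hd0D⟩ : D) := by
        apply Subtype.ext
        show ((q : R) * u) • (d : FractionRing R) = (p * (v : R)) • d0
        rw [Algebra.smul_def, Algebra.smul_def, map_mul, map_mul]
        linear_combination (algebraMap R (FractionRing R) u) * hpq
          - (algebraMap R (FractionRing R) p) * huv
      refine ⟨(q : R) * u, mul_ne_zero hq hu, p * (v : R) * P, ?_⟩
      funext i
      have h1 : ((q : R) * u) • F i d = (p * (v : R)) • F i ⟨d0, hd0D⟩ := by
        rw [← map_smul, ← map_smul, hkey]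
      have h2 : (r i * ((q : R) * u)) • F i d = (p * (v : R) * s i) • x i := by
        rw [mul_smul, h1, smul_smul, mul_comm (r i) (p * (v : R)), mul_smul, key i, smul_smul]
      have hprod : s i * ∏ j ∈ Finset.univ.erase i, s j = P :=
        Finset.mul_prod_erase Finset.univ s (Finset.mem_univ i)
      show ((q : R) * u) • (g d) i = (p * (v : R) * P) • x i
      have hgd : (g d) i = lam i • F i d := rfl
      rw [hgd]
      calc ((q : R) * u) • (lam i • F i d)
          = (∏ j ∈ Finset.univ.erase i, s j) • ((r i * ((q : R) * u)) • F i d) := by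
            rw [smul_smul, smul_smul]; congr 1; rw [hlam]; ring
        _ = (∏ j ∈ Finset.univ.erase i, s j) • ((p * (v : R) * s i) • x i) := by rw [h2]
        _ = (p * (v : R) * P) • x i := by rw [smul_smul, ← hprod]; congr 1; ring
    refine ⟨LinearMap.codRestrict (pureGen R x) g hmem, ?_⟩
    refine LinearMap.ker_eq_bot.mp (LinearMap.ker_eq_bot'.mpr fun d hd => ?_)
    have h0 : g d = 0 := congrArg Subtype.val hd
    have hFi : F i0 d = 0 := by
      have h1 : lam i0 • F i0 d = 0 := congrFun h0 i0
      rcases smul_eq_zero.mp h1 with hc | hc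
      · exact absurd hc (hlamne i0)
      · exact hc
    exact hinj i0 hi0 (hFi.trans (map_zero (F i0)).symm)
end

section
/- For a nonzero element a of a finite rank torsion-free module A over a Dedekind domain, IT(A) ≤ type(a), i.e. the inner type of A is a lower bound for the type of every nonzero element. -/
open TensorProduct

/-- For a nonzero element `a` of a finite rank torsion-free
module `A` over a Dedekind domain, `IT(A) ≤ type(a)`.  Here `x : Fin n → A` is a
maximal linearly independent system, and `T` is a rank-1 module realizing
`IT(A) = inf_i type(⟨x i⟩_*)`: it embeds into each `⟨x i⟩_*` and every rank-1
module embedding into all `⟨x i⟩_*` embeds into `T`.  The conclusion is that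
`T` embeds into `⟨a⟩_*`. -/
theorem stmt9 (R : Type*) [CommRing R] [IsDomain R] [IsDedekindDomain R]
    (A : Type*) [AddCommGroup A] [Module R A] [NoZeroSMulDivisors R A]
    (hfin : Module.rank R A < Cardinal.aleph0)
    (n : ℕ) (x : Fin n → A) (hli : LinearIndependent R x)
    (hmax : ∀ a : A, ∃ r : R, r ≠ 0 ∧ r • a ∈ Submodule.span R (Set.range x))
    (T : Submodule R (FractionRing R)) (hT : T ≠ ⊥)
    (hlb : ∀ i, ∃ f : T →ₗ[R] (pureGen R (x i)), Function.Injective f)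
    (hglb : ∀ D : Submodule R (FractionRing R), D ≠ ⊥ →
      (∀ i, ∃ f : D →ₗ[R] (pureGen R (x i)), Function.Injective f) →
      ∃ g : D →ₗ[R] T, Function.Injective g)
    (a : A) (ha : a ≠ 0) :
    ∃ f : T →ₗ[R] (pureGen R a), Function.Injective f := by

  classical
  obtain ⟨r, hr, hmem⟩ := hmax a
  rw [Submodule.mem_span_range_iff_exists_fun] at hmem
  obtain ⟨s, hs⟩ := hmem
  choose f hfinj using hlb
  obtain ⟨t0, ht0T, ht0⟩ := Submodule.exists_mem_ne_zero_of_ne_bot hT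
  set t0' : T := ⟨t0, ht0T⟩ with ht0'def
  have ht0ne : t0' ≠ 0 := by
    intro h
    exact ht0 (by simpa [ht0'def] using congrArg (Subtype.val) h)
  have hmem2 : ∀ i, ∃ ρ : R, ρ ≠ 0 ∧ ∃ σ : R, ρ • ((f i t0' : A)) = σ • x i :=
    fun i => (f i t0').2
  choose ρ hρ σ hσ using hmem2
  have hfne : ∀ i, (f i t0' : A) ≠ 0 := by
    intro i h
    exact ht0ne (hfinj i ((Subtype.ext h).trans (map_zero (f i)).symm))
  have hσne : ∀ i, σ i ≠ 0 := by
    intro i h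
    have h1 : ρ i • (f i t0' : A) ≠ 0 := smul_ne_zero (hρ i) (hfne i)
    rw [hσ i, h, zero_smul] at h1
    exact h1 rfl
  have hprod : (∏ i, σ i) ≠ 0 := Finset.prod_ne_zero_iff.mpr fun i _ => hσne i
  set F : T →ₗ[R] A :=
    ∑ i, (s i * ρ i * ∏ j ∈ Finset.univ.erase i, σ j) •
      ((pureGen R (x i)).subtype ∘ₗ f i) with hF
  have hFapply : ∀ t : T, F t = ∑ i,
      (s i * ρ i * ∏ j ∈ Finset.univ.erase i, σ j) • ((f i t : A)) := by
    intro t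
    simp [hF, LinearMap.sum_apply]
  have hFt0 : F t0' = ((∏ i, σ i) * r) • a := by
    rw [hFapply]
    have hterm : ∀ i, (s i * ρ i * ∏ j ∈ Finset.univ.erase i, σ j) • ((f i t0' : A))
        = ((∏ i, σ i) * s i) • x i := by
      intro i
      have h1 : (s i * ρ i * ∏ j ∈ Finset.univ.erase i, σ j)
          = (s i * ∏ j ∈ Finset.univ.erase i, σ j) * ρ i := by ring
      rw [h1, mul_smul, hσ i, smul_smul]
      congr 1
      have h2 := Finset.prod_erase_mul Finset.univ σ (Finset.mem_univ i)
      calc s i * (∏ j ∈ Finset.univ.erase i, σ j) * σ i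
          = s i * ((∏ j ∈ Finset.univ.erase i, σ j) * σ i) := by ring
        _ = (∏ i, σ i) * s i := by rw [h2]; ring
    calc (∑ i, (s i * ρ i * ∏ j ∈ Finset.univ.erase i, σ j) • ((f i t0' : A)))
        = ∑ i, ((∏ i, σ i) * s i) • x i := Finset.sum_congr rfl fun i _ => hterm i
      _ = (∏ i, σ i) • ∑ i, s i • x i := by
          rw [Finset.smul_sum]
          exact Finset.sum_congr rfl fun i _ => (mul_smul _ _ _)
      _ = ((∏ i, σ i) * r) • a := by rw [hs, smul_smul]
  have key : ∀ t : T, ∃ d c : R, d ≠ 0 ∧ d • t = c • t0' ∧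
      d • F t = (c * ((∏ i, σ i) * r)) • a := by
    intro t
    obtain ⟨⟨c, d⟩, hcd⟩ := IsLocalization.surj (nonZeroDivisors R) ((t : FractionRing R) / t0)
    have hd : (d : R) ≠ 0 := nonZeroDivisors.coe_ne_zero d
    have hdt : (algebraMap R (FractionRing R) (d : R)) * (t : FractionRing R) = (algebraMap R (FractionRing R) c) * t0 := by
      have := hcd
      field_simp at this
      rw [mul_comm]
      rw [mul_comm (algebraMap R (FractionRing R) c)]
      exact this
    have hdt' : (d : R) • t = c • t0' := by
      apply Subtype.ext
      push_cast
      rw [Algebra.smul_def, Algebra.smul_def]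
      exact hdt
    refine ⟨d, c, hd, hdt', ?_⟩
    calc (d : R) • F t = F ((d : R) • t) := (map_smul F _ t).symm
      _ = F (c • t0') := by rw [hdt']
      _ = c • F t0' := map_smul F c t0'
      _ = (c * ((∏ i, σ i) * r)) • a := by rw [hFt0, smul_smul]
  have hFmem : ∀ t : T, F t ∈ pureGen R a := by
    intro t
    obtain ⟨d, c, hd, _, hEq⟩ := key t
    exact ⟨d, hd, c * ((∏ i, σ i) * r), hEq⟩
  refine ⟨F.codRestrict (pureGen R a) hFmem, ?_⟩
  rw [← LinearMap.ker_eq_bot]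
  rw [Submodule.eq_bot_iff]
  intro t ht
  have hFt : F t = 0 := by
    have := congrArg Subtype.val (LinearMap.mem_ker.mp ht)
    simpa using this
  obtain ⟨d, c, hd, hdt, hEq⟩ := key t
  rw [hFt, smul_zero] at hEq
  have hc : c = 0 := by
    rcases smul_eq_zero.mp hEq.symm with h | h
    · rcases mul_eq_zero.mp h with h' | h'
      · exact h'
      · exact absurd h' (mul_ne_zero hprod hr)
    · exact absurd h ha
  rw [hc, zero_smul] at hdt
  have : (algebraMap R (FractionRing R) (d : R)) * (t : FractionRing R) = 0 := by
    have := congrArg Subtype.val hdt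
    push_cast at this
    rw [Algebra.smul_def] at this
    simpa using this
  rcases mul_eq_zero.mp this with h | h
  · exact absurd ((map_eq_zero_iff _ (IsFractionRing.injective R (FractionRing R))).mp h) hd
  · exact Subtype.ext h
end

section
/- Two nonzero subgroups A and B of the rationals ℚ have the same type (i.e. are isomorphic as abelian groups) if and only if there exists a nonzero rational q with A = qB. -/
private lemma den_mul_self (x : ℚ) : (x.den : ℚ) * x = x.num := by
  rw [mul_comm, Rat.mul_den_eq_num]

private lemma exists_ne_zero {A : AddSubgroup ℚ} (hA : A ≠ ⊥) : ∃ a ∈ A, a ≠ 0 := by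
  by_contra h
  push_neg at h
  apply hA
  ext x
  simp only [AddSubgroup.mem_bot]
  exact ⟨fun hx => h x hx, fun hx => hx ▸ A.zero_mem⟩

/-- Two nonzero subgroups `A, B` of `ℚ` have the same type
(i.e. are isomorphic as abelian groups) iff `A = q B` for some nonzero rational
`q`. -/
theorem stmt10 (A B : AddSubgroup ℚ) (hA : A ≠ ⊥) (hB : B ≠ ⊥) :
    Nonempty (A ≃+ B) ↔ ∃ q : ℚ, q ≠ 0 ∧ (A : Set ℚ) = (fun x => q * x) '' (B : Set ℚ) := by
  constructor
  · rintro ⟨f⟩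
    obtain ⟨a, haA, ha⟩ := exists_ne_zero hA
    set fa : ℚ := (f ⟨a, haA⟩ : ℚ) with hfa
    -- key linearity fact: f is multiplication by fa / a
    have key : ∀ x (hx : x ∈ A), (f ⟨x, hx⟩ : ℚ) * a = fa * x := by
      intro x hx
      have hm : ((a.num * x.den : ℤ) : ℚ) * x = ((x.num * a.den : ℤ) : ℚ) * a := by
        push_cast
        rw [mul_assoc, den_mul_self, mul_assoc, den_mul_self, mul_comm (a.num : ℚ)]
      have hm0 : ((a.num * x.den : ℤ) : ℚ) ≠ 0 := by
        have := Rat.num_ne_zero.mpr ha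
        have := x.den_nz
        push_cast
        positivity
      have hsub : (a.num * x.den : ℤ) • (⟨x, hx⟩ : A) = (x.num * a.den : ℤ) • ⟨a, haA⟩ := by
        apply Subtype.ext
        push_cast [zsmul_eq_mul]
        exact_mod_cast hm
      have hf := congrArg (fun y => (f y : ℚ)) hsub
      simp only [map_zsmul, AddSubgroup.coe_zsmul, zsmul_eq_mul] at hf
      have h1 : ((a.num * x.den : ℤ) : ℚ) * ((f ⟨x, hx⟩ : ℚ) * a)
          = ((a.num * x.den : ℤ) : ℚ) * (fa * x) := by
        calc ((a.num * x.den : ℤ) : ℚ) * ((f ⟨x, hx⟩ : ℚ) * a)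
            = (((a.num * x.den : ℤ) : ℚ) * (f ⟨x, hx⟩ : ℚ)) * a := by ring
          _ = (((x.num * a.den : ℤ) : ℚ) * fa) * a := by rw [hf]
          _ = fa * (((x.num * a.den : ℤ) : ℚ) * a) := by ring
          _ = fa * (((a.num * x.den : ℤ) : ℚ) * x) := by rw [hm]
          _ = ((a.num * x.den : ℤ) : ℚ) * (fa * x) := by ring
      exact mul_left_cancel₀ hm0 h1
    have hfa0 : fa ≠ 0 := by
      intro h0
      have : f ⟨a, haA⟩ = 0 := Subtype.ext h0
      have := f.injective (this.trans (map_zero f).symm)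
      exact ha (congrArg Subtype.val this)
    refine ⟨a / fa, div_ne_zero ha hfa0, ?_⟩
    ext x
    simp only [Set.mem_image, SetLike.mem_coe]
    constructor
    · intro hx
      refine ⟨(f ⟨x, hx⟩ : ℚ), (f ⟨x, hx⟩).2, ?_⟩
      have := key x hx
      field_simp
      linarith [this]
    · rintro ⟨b, hb, rfl⟩
      obtain ⟨y, hy⟩ := f.surjective ⟨b, hb⟩
      have hb' : (f y : ℚ) = b := congrArg Subtype.val hy
      have := key y y.2
      rw [hb'] at this
      have : a / fa * b = y := by
        field_simp
        linarith [this]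
      rw [this]
      exact y.2
  · rintro ⟨q, hq, hAB⟩
    have hmem : ∀ b : B, q * (b : ℚ) ∈ A := by
      intro b
      have : q * (b : ℚ) ∈ (A : Set ℚ) := by rw [hAB]; exact ⟨b, b.2, rfl⟩
      exact this
    let g : B →+ A :=
      { toFun := fun b => ⟨q * b, hmem b⟩
        map_zero' := by simp
        map_add' := fun x y => by apply Subtype.ext; push_cast; ring }
    have hbij : Function.Bijective g := by
      constructor
      · intro x y hxy
        have : q * (x : ℚ) = q * y := congrArg Subtype.val hxy
        exact Subtype.ext (mul_left_cancel₀ hq this)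
      · intro a
        have : (a : ℚ) ∈ (A : Set ℚ) := a.2
        rw [hAB] at this
        obtain ⟨b, hb, hba⟩ := this
        exact ⟨⟨b, hb⟩, Subtype.ext hba⟩
    exact ⟨(AddEquiv.ofBijective g hbij).symm⟩
end
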